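/- arXiv:2204.01336 — 3 statements merged into one kernel-verified Lean document; each statement's English description precedes it below -/
import Mathlib

section
/- The Bellman inequality holds for 𝓑: for every x ∈ ℝ and every τ ∈ (−1,1), 𝓑(x) ≥ (1/2)[𝓑(X(x,−τ)) + 𝓑(X(x,τ))], where X(x,τ) = (x+τ)/√(1−τ²). -/
open MeasureTheory

noncomputable section

/-- The dyadic subinterval `[k/2^n, (k+1)/2^n]` of `[0,1]`. -/
def dyadicI (n k : ℕ) : Set ℝ := Set.Icc ((k : ℝ) / 2 ^ n) (((k : ℝ) + 1) / 2 ^ n)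

/-- The Haar function of the dyadic interval `[k/2^n, (k+1)/2^n]`: it equals `-1` on the
left half of the interval, `+1` on its right half and `0` elsewhere. -/
def haar (n k : ℕ) (x : ℝ) : ℝ :=
  if x ∈ Set.Ico ((k : ℝ) / 2 ^ n) ((2 * (k : ℝ) + 1) / 2 ^ (n + 1)) then -1
  else if x ∈ Set.Ico ((2 * (k : ℝ) + 1) / 2 ^ (n + 1)) (((k : ℝ) + 1) / 2 ^ n) then 1
  else 0

/-- The Haar coefficient `a_J = μ(J)⁻¹ ∫_I f h_J` of `f` at `J = [k/2^n, (k+1)/2^n]`. -/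
def haarCoeff (f : ℝ → ℝ) (n k : ℕ) : ℝ :=
  2 ^ n * ∫ x in Set.Icc (0 : ℝ) 1, f x * haar n k x

/-- The dyadic square function `Sf = √(Σ_J a_J² χ_J)`. -/
def sqFn (f : ℝ → ℝ) (x : ℝ) : ℝ :=
  Real.sqrt (∑' p : ℕ × ℕ, (haarCoeff f p.1 p.2) ^ 2 * (dyadicI p.1 p.2).indicator 1 x)

/-- A test function for the Bellman function: integrable on `I = [0,1]`, with zero mean
and with dyadic square function essentially bounded by `1` on `I`. -/
def Admissible (f : ℝ → ℝ) : Prop :=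
  IntegrableOn f (Set.Icc 0 1) ∧ (∫ x in Set.Icc (0 : ℝ) 1, f x) = 0 ∧
    ∀ᵐ x ∂(volume.restrict (Set.Icc (0 : ℝ) 1)), sqFn f x ≤ 1

/-- The Bellman function `𝓑(x) = sup{ μ{f ≥ x} : ∫_I f = 0, ‖Sf‖_∞ ≤ 1 }`. -/
def bellman (x : ℝ) : ℝ :=
  sSup { m : ℝ | ∃ f : ℝ → ℝ, Admissible f ∧
    m = (volume { y ∈ Set.Icc (0 : ℝ) 1 | x ≤ f y }).toReal }

/-- `X(x,τ) = (x+τ)/√(1-τ²)`. -/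
def XX (x t : ℝ) : ℝ := (x + t) / Real.sqrt (1 - t ^ 2)

lemma haar_eq_zero_left {n k : ℕ} {x : ℝ} (h : x < (k : ℝ) / 2 ^ n) : haar n k x = 0 := by
  have h1 : (k:ℝ)/2^n ≤ (2*(k:ℝ)+1)/2^(n+1) := by
    rw [div_le_div_iff₀ (by positivity) (by positivity), pow_succ]; nlinarith [pow_pos (show (0:ℝ)<2 by norm_num) n]
  unfold haar
  rw [if_neg, if_neg] <;> simp only [Set.mem_Ico, not_and, not_le, not_lt] <;> intro hx <;> linarith

lemma haar_eq_zero_right {n k : ℕ} {x : ℝ} (h : ((k : ℝ)+1) / 2 ^ n ≤ x) : haar n k x = 0 := by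
  have h1 : (2*(k:ℝ)+1)/2^(n+1) ≤ ((k:ℝ)+1)/2^n := by
    rw [div_le_div_iff₀ (by positivity) (by positivity), pow_succ]; nlinarith [pow_pos (show (0:ℝ)<2 by norm_num) n]
  unfold haar
  rw [if_neg, if_neg] <;> simp only [Set.mem_Ico, not_and, not_le, not_lt] <;> intro hx <;> linarith

lemma haar_comp_left (n k : ℕ) (y : ℝ) : haar (n+1) k y = haar n k (2*y) := by
  have key : ∀ (m : ℕ) (c z : ℝ), c/2^(m+1) ≤ z ↔ c/2^m ≤ 2*z := by
    intro m c z
    rw [div_le_iff₀ (by positivity), div_le_iff₀ (by positivity), pow_succ]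
    constructor <;> intro <;> nlinarith [pow_pos (show (0:ℝ)<2 by norm_num) m]
  have key2 : ∀ (m : ℕ) (c z : ℝ), z < c/2^(m+1) ↔ 2*z < c/2^m := by
    intro m c z
    rw [lt_div_iff₀ (by positivity), lt_div_iff₀ (by positivity), pow_succ]
    constructor <;> intro <;> nlinarith [pow_pos (show (0:ℝ)<2 by norm_num) m]
  unfold haar
  simp only [Set.mem_Ico, key, key2]

lemma haar_comp_right (n k : ℕ) (y : ℝ) : haar (n+1) (k + 2^n) y = haar n k (2*y - 1) := by
  have p1 : (0:ℝ) < 2^n := by positivity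
  have key : ∀ (m : ℕ) (c z : ℝ), (c + 2^m)/2^(m+1) ≤ z ↔ c/2^m ≤ 2*z - 1 := by
    intro m c z
    have pm : (0:ℝ) < 2^m := by positivity
    rw [div_le_iff₀ (by positivity), div_le_iff₀ (by positivity), pow_succ]
    constructor <;> intro <;> nlinarith
  have key2 : ∀ (m : ℕ) (c z : ℝ), z < (c + 2^m)/2^(m+1) ↔ 2*z - 1 < c/2^m := by
    intro m c z
    have pm : (0:ℝ) < 2^m := by positivity
    rw [lt_div_iff₀ (by positivity), lt_div_iff₀ (by positivity), pow_succ]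
    constructor <;> intro <;> nlinarith
  unfold haar
  push_cast
  have e1 : ((k:ℝ) + 2^n)/2^(n+1) ≤ y ↔ (k:ℝ)/2^n ≤ 2*y - 1 := key n k y
  have h2n : (2:ℝ)^(n+1) = 2*2^n := by rw [pow_succ]; ring
  have h2nn : (2:ℝ)^(n+1+1) = 2*2^(n+1) := by rw [pow_succ]; ring
  have pm : (0:ℝ) < 2^(n+1) := by positivity
  have e2 : y < (2*((k:ℝ) + 2^n)+1)/2^(n+1+1) ↔ 2*y - 1 < (2*(k:ℝ)+1)/2^(n+1) := by
    rw [lt_div_iff₀ (by positivity), lt_div_iff₀ (by positivity), h2nn]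
    constructor <;> intro <;> nlinarith
  have e3 : y < ((k:ℝ) + 2^n + 1)/2^(n+1) ↔ 2*y - 1 < ((k:ℝ)+1)/2^n := by
    rw [lt_div_iff₀ (by positivity), lt_div_iff₀ (by positivity), h2n]
    constructor <;> intro <;> nlinarith
  have e4 : ((2*((k:ℝ)+2^n))+1)/2^(n+1+1) ≤ y ↔ (2*(k:ℝ)+1)/2^(n+1) ≤ 2*y - 1 := by
    rw [div_le_iff₀ (by positivity), div_le_iff₀ (by positivity), h2nn]
    constructor <;> intro <;> nlinarith
  simp only [Set.mem_Ico, e1, e2, e3, e4]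

lemma dyadicI_comp_left (n k : ℕ) (y : ℝ) : y ∈ dyadicI (n+1) k ↔ 2*y ∈ dyadicI n k := by
  unfold dyadicI
  have h2n : (2:ℝ)^(n+1) = 2*2^n := by rw [pow_succ]; ring
  simp only [Set.mem_Icc]
  rw [div_le_iff₀ (by positivity), div_le_iff₀ (by positivity), le_div_iff₀ (by positivity),
    le_div_iff₀ (by positivity), h2n]
  constructor <;> intro h <;> constructor <;> nlinarith [h.1, h.2]

lemma dyadicI_comp_right (n k : ℕ) (y : ℝ) :
    y ∈ dyadicI (n+1) (k + 2^n) ↔ 2*y - 1 ∈ dyadicI n k := by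
  unfold dyadicI
  have p1 : (0:ℝ) < 2^n := by positivity
  have h2n : (2:ℝ)^(n+1) = 2*2^n := by rw [pow_succ]; ring
  simp only [Set.mem_Icc]
  push_cast
  rw [div_le_iff₀ (by positivity), div_le_iff₀ (by positivity), le_div_iff₀ (by positivity),
    le_div_iff₀ (by positivity), h2n]
  constructor <;> intro h <;> constructor <;> nlinarith [h.1, h.2]

lemma haar_eq_indicator (n k : ℕ) : haar n k = fun x =>
    (Set.Ico ((k : ℝ) / 2 ^ n) ((2 * (k : ℝ) + 1) / 2 ^ (n + 1))).indicator (fun _ => (-1:ℝ)) x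
    + (Set.Ico ((2 * (k : ℝ) + 1) / 2 ^ (n + 1)) (((k : ℝ) + 1) / 2 ^ n)).indicator
        (fun _ => (1:ℝ)) x := by
  funext x
  unfold haar
  by_cases h1 : x ∈ Set.Ico ((k : ℝ) / 2 ^ n) ((2 * (k : ℝ) + 1) / 2 ^ (n + 1))
  · have h2 : x ∉ Set.Ico ((2 * (k : ℝ) + 1) / 2 ^ (n + 1)) (((k : ℝ) + 1) / 2 ^ n) := by
      simp only [Set.mem_Ico, not_and, not_lt] at h1 ⊢
      intro hx; linarith [h1.2]
    simp [h1, h2]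
  · by_cases h2 : x ∈ Set.Ico ((2 * (k : ℝ) + 1) / 2 ^ (n + 1)) (((k : ℝ) + 1) / 2 ^ n) <;>
      simp [h1, h2]

lemma haar_measurable (n k : ℕ) : Measurable (haar n k) := by
  rw [haar_eq_indicator]
  exact ((measurable_const.indicator measurableSet_Ico).add
    (measurable_const.indicator measurableSet_Ico))

lemma haar_abs_le (n k : ℕ) (x : ℝ) : |haar n k x| ≤ 1 := by
  unfold haar
  split_ifs <;> simp

lemma haar_eq_zero_of_one_le {n k : ℕ} {x : ℝ} (hk : 2^n ≤ k) (hx : x < 1) : haar n k x = 0 := by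
  apply haar_eq_zero_left
  have : (1:ℝ) ≤ (k:ℝ)/2^n := by
    rw [le_div_iff₀ (by positivity)]
    have : ((2:ℝ))^n ≤ (k:ℝ) := by exact_mod_cast Nat.cast_le.mpr hk |>.trans_eq (by push_cast; ring)
    linarith
  linarith

lemma haarCoeff_zero_of_ge (F : ℝ → ℝ) {n k : ℕ} (hk : 2^n ≤ k) :
    (2:ℝ) ^ n * ∫ x in Set.Icc (0 : ℝ) 1, F x * haar n k x = 0 := by
  have : ∀ᵐ x ∂(volume.restrict (Set.Icc (0:ℝ) 1)), F x * haar n k x = 0 := by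
    have h1 : ∀ᵐ (x:ℝ) ∂volume, x ≠ 1 := by
      refine ae_iff.mpr ?_
      simpa using volume_singleton (a := (1:ℝ))
    filter_upwards [ae_restrict_of_ae h1, ae_restrict_mem measurableSet_Icc] with x hx hmem
    have hx1 : x < 1 := lt_of_le_of_ne hmem.2 hx
    rw [haar_eq_zero_of_one_le hk hx1, mul_zero]
  rw [integral_congr_ae this]
  simp


lemma haarCoeff_zero (F : ℝ → ℝ) {n k : ℕ} (hk : 2^n ≤ k) : haarCoeff F n k = 0 :=
  haarCoeff_zero_of_ge F hk

/-- the integral of a Haar function over `[0,1]` vanishes -/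
lemma integral_haar (n k : ℕ) : ∫ x in Set.Icc (0 : ℝ) 1, haar n k x = 0 := by
  rcases le_or_gt (2^n) k with hk | hk
  · have := haarCoeff_zero_of_ge (fun _ => (1:ℝ)) hk
    simp only [one_mul] at this
    have h2 : (2:ℝ)^n ≠ 0 := by positivity
    exact (mul_eq_zero.mp this).resolve_left h2
  · -- intervals are inside [0,1]
    have pm : (0:ℝ) < 2^n := by positivity
    have pm1 : (0:ℝ) < 2^(n+1) := by positivity
    have h2n : (2:ℝ)^(n+1) = 2*2^n := by rw [pow_succ]; ring
    have hkr : (k:ℝ) + 1 ≤ 2^n := by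
      have : (k:ℝ) + 1 ≤ (2^n : ℕ) := by exact_mod_cast Nat.succ_le_of_lt hk
      simpa using this
    have ha : (0:ℝ) ≤ (k:ℝ)/2^n := by positivity
    have hb : ((k:ℝ)+1)/2^n ≤ 1 := by rw [div_le_one pm]; linarith
    have hab : (k:ℝ)/2^n ≤ (2*(k:ℝ)+1)/2^(n+1) := by
      rw [div_le_div_iff₀ pm pm1, h2n]; nlinarith
    have hbc : (2*(k:ℝ)+1)/2^(n+1) ≤ ((k:ℝ)+1)/2^n := by
      rw [div_le_div_iff₀ pm1 pm, h2n]; nlinarith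
    rw [haar_eq_indicator]
    rw [integral_add]
    · rw [integral_indicator_const _ measurableSet_Ico, integral_indicator_const _ measurableSet_Ico]
      rw [measureReal_def, measureReal_def]
      rw [Measure.restrict_apply measurableSet_Ico, Measure.restrict_apply measurableSet_Ico]
      have hsub1 : Set.Ico ((k:ℝ)/2^n) ((2*(k:ℝ)+1)/2^(n+1)) ∩ Set.Icc 0 1
          = Set.Ico ((k:ℝ)/2^n) ((2*(k:ℝ)+1)/2^(n+1)) := by
        apply Set.inter_eq_self_of_subset_left
        intro x hx
        exact ⟨le_trans ha hx.1, le_trans (le_of_lt hx.2) (le_trans hbc hb)⟩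
      have hsub2 : Set.Ico ((2*(k:ℝ)+1)/2^(n+1)) (((k:ℝ)+1)/2^n) ∩ Set.Icc 0 1
          = Set.Ico ((2*(k:ℝ)+1)/2^(n+1)) (((k:ℝ)+1)/2^n) := by
        apply Set.inter_eq_self_of_subset_left
        intro x hx
        exact ⟨le_trans (le_trans ha hab) hx.1, le_trans (le_of_lt hx.2) hb⟩
      rw [hsub1, hsub2, Real.volume_Ico, Real.volume_Ico]
      have l1 : (2*(k:ℝ)+1)/2^(n+1) - (k:ℝ)/2^n = ((k:ℝ)+1)/2^n - (2*(k:ℝ)+1)/2^(n+1) := by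
        field_simp
        ring
      rw [ENNReal.toReal_ofReal (by linarith), ENNReal.toReal_ofReal (by linarith), l1]
      simp [smul_eq_mul]
    · exact (integrable_const (-1:ℝ)).indicator measurableSet_Ico
    · exact (integrable_const (1:ℝ)).indicator measurableSet_Ico

lemma vol_preimage (b : ℝ) (S : Set ℝ) :
    volume ((fun y => 2*y + b) ⁻¹' S) = volume S / 2 := by
  have : (fun y : ℝ => 2*y + b) ⁻¹' S = (fun y : ℝ => 2*y) ⁻¹' ((fun z : ℝ => z + b) ⁻¹' S) := rfl
  rw [this]
  have h2 : ((2:ℝ)) ≠ 0 := by norm_num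
  rw [show (fun y : ℝ => 2*y) = (fun y : ℝ => (2:ℝ)*y) from rfl]
  rw [Real.volume_preimage_mul_left h2, measure_preimage_add_right]
  rw [show |(2:ℝ)⁻¹| = 2⁻¹ by norm_num]
  rw [ENNReal.ofReal_inv_of_pos (by norm_num), ENNReal.ofReal_ofNat]
  rw [div_eq_mul_inv, mul_comm]

lemma integral_comp (F : ℝ → ℝ) (b : ℝ) {s : Set ℝ} (hs : MeasurableSet s) :
    ∫ y in (fun y => 2*y + b) ⁻¹' s, F (2*y + b) = (1/2) * ∫ x in s, F x := by
  have hps : MeasurableSet ((fun y : ℝ => 2*y + b) ⁻¹' s) := by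
    exact hs.preimage (by fun_prop)
  rw [← integral_indicator hps, ← integral_indicator hs]
  have : ((fun y : ℝ => 2*y + b) ⁻¹' s).indicator (fun y => F (2*y + b))
      = fun y => s.indicator F (2*y + b) := by
    funext y
    by_cases h : 2*y + b ∈ s
    · rw [Set.indicator_of_mem (by exact h) F, Set.indicator_of_mem (by exact h)]
    · rw [Set.indicator_of_notMem (by exact h) F, Set.indicator_of_notMem (by exact h)]
  rw [this]
  have step1 : (fun y : ℝ => s.indicator F (2*y + b)) = fun y : ℝ => (fun z => s.indicator F (z + b)) (2*y) := rfl
  rw [step1, MeasureTheory.Measure.integral_comp_mul_left (fun z => s.indicator F (z + b)) 2]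
  rw [integral_add_right_eq_self (s.indicator F) b]
  norm_num

lemma preimage_left_half : (fun y : ℝ => 2*y + 0) ⁻¹' Set.Icc 0 1 = Set.Icc 0 (1/2) := by
  ext y; simp only [Set.mem_preimage, Set.mem_Icc]; constructor <;> intro h <;>
    exact ⟨by linarith [h.1], by linarith [h.2]⟩

lemma preimage_right_half : (fun y : ℝ => 2*y + (-1)) ⁻¹' Set.Icc 0 1 = Set.Icc (1/2) 1 := by
  ext y; simp only [Set.mem_preimage, Set.mem_Icc]; constructor <;> intro h <;>
    exact ⟨by linarith [h.1], by linarith [h.2]⟩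

lemma preimage_big_left : (fun y : ℝ => 2*y + 0) ⁻¹' Set.Icc 0 2 = Set.Icc 0 1 := by
  ext y; simp only [Set.mem_preimage, Set.mem_Icc]; constructor <;> intro h <;>
    exact ⟨by linarith [h.1], by linarith [h.2]⟩

lemma preimage_big_right : (fun y : ℝ => 2*y + (-1)) ⁻¹' Set.Icc (-1) 1 = Set.Icc 0 1 := by
  ext y; simp only [Set.mem_preimage, Set.mem_Icc]; constructor <;> intro h <;>
    exact ⟨by linarith [h.1], by linarith [h.2]⟩

lemma integral_comp_left_half (F : ℝ → ℝ) :
    ∫ y in Set.Icc (0:ℝ) (1/2), F (2*y) = (1/2) * ∫ x in Set.Icc (0:ℝ) 1, F x := by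
  have := integral_comp F 0 (s := Set.Icc 0 1) measurableSet_Icc
  rw [preimage_left_half] at this
  simpa using this

lemma integral_comp_right_half (F : ℝ → ℝ) :
    ∫ y in Set.Icc (1/2:ℝ) 1, F (2*y - 1) = (1/2) * ∫ x in Set.Icc (0:ℝ) 1, F x := by
  have := integral_comp F (-1) (s := Set.Icc 0 1) measurableSet_Icc
  rw [preimage_right_half] at this
  simpa [sub_eq_add_neg] using this

lemma integral_comp_big_left (F : ℝ → ℝ) (hF : ∀ x : ℝ, 1 ≤ x → F x = 0)
    (hInt : IntegrableOn F (Set.Icc 0 1)) :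
    ∫ y in Set.Icc (0:ℝ) 1, F (2*y) = (1/2) * ∫ x in Set.Icc (0:ℝ) 1, F x := by
  have := integral_comp F 0 (s := Set.Icc 0 2) measurableSet_Icc
  rw [preimage_big_left] at this
  have hsplit : Set.Icc (0:ℝ) 2 = Set.Icc 0 1 ∪ Set.Ioc 1 2 := by
    ext x; simp only [Set.mem_union, Set.mem_Icc, Set.mem_Ioc]
    constructor
    · rintro ⟨h1, h2⟩
      rcases le_or_gt x 1 with h | h
      · exact Or.inl ⟨h1, h⟩
      · exact Or.inr ⟨h, h2⟩
    · rintro (⟨h1, h2⟩ | ⟨h1, h2⟩) <;> constructor <;> linarith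
  have hzero : ∫ x in Set.Ioc (1:ℝ) 2, F x = 0 := by
    rw [setIntegral_congr_fun measurableSet_Ioc (g := fun _ => (0:ℝ))
      (fun x hx => hF x (le_of_lt hx.1))]
    simp
  have hint2 : IntegrableOn F (Set.Ioc (1:ℝ) 2) := by
    apply IntegrableOn.congr_fun (integrableOn_zero) _ measurableSet_Ioc
    intro x hx; exact (hF x (le_of_lt hx.1)).symm
  have hdisj : Disjoint (Set.Icc (0:ℝ) 1) (Set.Ioc 1 2) := by
    rw [Set.disjoint_left]
    intro a ha ha'
    exact absurd ha.2 (not_le.mpr ha'.1)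
  rw [hsplit, setIntegral_union hdisj measurableSet_Ioc hInt hint2, hzero, add_zero] at this
  simpa using this

lemma integral_comp_big_right (F : ℝ → ℝ) (hF : ∀ x : ℝ, x < 0 → F x = 0)
    (hInt : IntegrableOn F (Set.Icc 0 1)) :
    ∫ y in Set.Icc (0:ℝ) 1, F (2*y - 1) = (1/2) * ∫ x in Set.Icc (0:ℝ) 1, F x := by
  have := integral_comp F (-1) (s := Set.Icc (-1) 1) measurableSet_Icc
  rw [preimage_big_right] at this
  have hsplit : Set.Icc (-1:ℝ) 1 = Set.Ico (-1) 0 ∪ Set.Icc 0 1 := by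
    ext x; simp only [Set.mem_union, Set.mem_Icc, Set.mem_Ico]
    constructor
    · rintro ⟨h1, h2⟩
      rcases lt_or_ge x 0 with h | h
      · exact Or.inl ⟨h1, h⟩
      · exact Or.inr ⟨h, h2⟩
    · rintro (⟨h1, h2⟩ | ⟨h1, h2⟩) <;> constructor <;> linarith
  have hzero : ∫ x in Set.Ico (-1:ℝ) 0, F x = 0 := by
    rw [setIntegral_congr_fun measurableSet_Ico (g := fun _ => (0:ℝ))
      (fun x hx => hF x hx.2)]
    simp
  have hint2 : IntegrableOn F (Set.Ico (-1:ℝ) 0) := by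
    apply IntegrableOn.congr_fun (integrableOn_zero) _ measurableSet_Ico
    intro x hx; exact (hF x hx.2).symm
  have hdisj : Disjoint (Set.Ico (-1:ℝ) 0) (Set.Icc 0 1) := by
    rw [Set.disjoint_left]
    intro a ha ha'
    exact absurd ha'.1 (not_le.mpr ha.2)
  rw [hsplit, setIntegral_union hdisj measurableSet_Icc hint2 hInt, hzero, zero_add] at this
  simpa [sub_eq_add_neg] using this

/-! ### The midpoint construction -/

def mix (c τ : ℝ) (f g : ℝ → ℝ) (y : ℝ) : ℝ :=
  if y < 1/2 then c * f (2*y) - τ else c * g (2*y - 1) + τ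

section mixlemmas

variable {c τ : ℝ} {f g : ℝ → ℝ}

lemma intOn_comp_left (hf : IntegrableOn f (Set.Icc 0 1)) :
    IntegrableOn (fun y => f (2*y)) (Set.Icc (0:ℝ) (1/2)) := by
  have h1 : Integrable ((Set.Icc (0:ℝ) 1).indicator f) := (integrable_indicator_iff measurableSet_Icc).mpr hf
  have h2 : Integrable (fun y => (Set.Icc (0:ℝ) 1).indicator f (2*y)) := h1.comp_mul_left' (by norm_num)
  have h3 : (fun y => (Set.Icc (0:ℝ) 1).indicator f (2*y))
      = (Set.Icc (0:ℝ) (1/2)).indicator (fun y => f (2*y)) := by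
    funext y
    by_cases h : y ∈ Set.Icc (0:ℝ) (1/2)
    · rw [Set.indicator_of_mem h]
      rw [Set.mem_Icc] at h
      exact Set.indicator_of_mem (Set.mem_Icc.mpr ⟨by linarith [h.1], by linarith [h.2]⟩) f
    · rw [Set.indicator_of_notMem h]
      refine Set.indicator_of_notMem (fun hc => h ?_) f
      rw [Set.mem_Icc] at hc
      exact Set.mem_Icc.mpr ⟨by linarith [hc.1], by linarith [hc.2]⟩
  rw [h3] at h2
  exact (integrable_indicator_iff measurableSet_Icc).mp h2

lemma intOn_comp_right (hg : IntegrableOn g (Set.Icc 0 1)) :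
    IntegrableOn (fun y => g (2*y - 1)) (Set.Icc (1/2:ℝ) 1) := by
  have h1 : Integrable ((Set.Icc (0:ℝ) 1).indicator g) := (integrable_indicator_iff measurableSet_Icc).mpr hg
  have h1' : Integrable (fun z => (Set.Icc (0:ℝ) 1).indicator g (z - 1)) := by
    exact h1.comp_sub_right 1
  have h2 : Integrable (fun y => (Set.Icc (0:ℝ) 1).indicator g (2*y - 1)) :=
    h1'.comp_mul_left' (R := 2) (by norm_num)
  have h3 : (fun y => (Set.Icc (0:ℝ) 1).indicator g (2*y - 1))
      = (Set.Icc (1/2:ℝ) 1).indicator (fun y => g (2*y - 1)) := by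
    funext y
    by_cases h : y ∈ Set.Icc (1/2:ℝ) 1
    · rw [Set.indicator_of_mem h]
      rw [Set.mem_Icc] at h
      exact Set.indicator_of_mem (Set.mem_Icc.mpr ⟨by linarith [h.1], by linarith [h.2]⟩) g
    · rw [Set.indicator_of_notMem h]
      refine Set.indicator_of_notMem (fun hc => h ?_) g
      rw [Set.mem_Icc] at hc
      exact Set.mem_Icc.mpr ⟨by linarith [hc.1], by linarith [hc.2]⟩
  rw [h3] at h2
  exact (integrable_indicator_iff measurableSet_Icc).mp h2

lemma mix_intOn_left (hf : IntegrableOn f (Set.Icc 0 1)) :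
    IntegrableOn (mix c τ f g) (Set.Icc (0:ℝ) (1/2)) := by
  have base : IntegrableOn (fun y => c * f (2*y) - τ) (Set.Icc (0:ℝ) (1/2)) :=
    ((intOn_comp_left hf).const_mul c).sub (integrableOn_const (by simp))
  refine IntegrableOn.congr_fun_ae base ?_
  have h1 : ∀ᵐ (x:ℝ) ∂(volume.restrict (Set.Icc (0:ℝ) (1/2))), x ≠ 1/2 := by
    refine ae_restrict_of_ae (ae_iff.mpr ?_)
    simpa using volume_singleton (a := (1/2:ℝ))
  filter_upwards [h1, ae_restrict_mem measurableSet_Icc] with y hy hmem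
  have hlt : y < 1/2 := lt_of_le_of_ne hmem.2 hy
  unfold mix
  rw [if_pos hlt]

lemma mix_intOn_right (hg : IntegrableOn g (Set.Icc 0 1)) :
    IntegrableOn (mix c τ f g) (Set.Icc (1/2:ℝ) 1) := by
  have base : IntegrableOn (fun y => c * g (2*y - 1) + τ) (Set.Icc (1/2:ℝ) 1) :=
    ((intOn_comp_right hg).const_mul c).add (integrableOn_const (by simp))
  refine IntegrableOn.congr_fun base (fun y hy => ?_) measurableSet_Icc
  unfold mix
  rw [if_neg (not_lt.mpr hy.1)]

lemma mix_intOn (hf : IntegrableOn f (Set.Icc 0 1)) (hg : IntegrableOn g (Set.Icc 0 1)) :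
    IntegrableOn (mix c τ f g) (Set.Icc (0:ℝ) 1) := by
  refine IntegrableOn.mono_set ((mix_intOn_left hf).union (mix_intOn_right hg)) ?_
  intro y hy
  rcases le_or_gt y (1/2) with h | h
  · exact Or.inl ⟨hy.1, h⟩
  · exact Or.inr ⟨le_of_lt h, hy.2⟩

lemma mix_ae_left :
    ∀ᵐ y ∂(volume.restrict (Set.Icc (0:ℝ) (1/2))), mix c τ f g y = c * f (2*y) - τ := by
  have h1 : ∀ᵐ (x:ℝ) ∂(volume.restrict (Set.Icc (0:ℝ) (1/2))), x ≠ 1/2 := by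
    refine ae_restrict_of_ae (ae_iff.mpr ?_)
    simpa using volume_singleton (a := (1/2:ℝ))
  filter_upwards [h1, ae_restrict_mem measurableSet_Icc] with y hy hmem
  have hlt : y < 1/2 := lt_of_le_of_ne hmem.2 hy
  unfold mix
  rw [if_pos hlt]

lemma int_mix_left (hf : IntegrableOn f (Set.Icc 0 1))
    (hf0 : (∫ x in Set.Icc (0:ℝ) 1, f x) = 0) :
    ∫ y in Set.Icc (0:ℝ) (1/2), mix c τ f g y = -τ/2 := by
  rw [integral_congr_ae mix_ae_left]
  have : ∫ y in Set.Icc (0:ℝ) (1/2), (c * f (2*y) - τ)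
      = ∫ y in Set.Icc (0:ℝ) (1/2), (fun x => c * f x - τ) (2*y) := rfl
  rw [this, integral_comp_left_half (fun x => c * f x - τ)]
  rw [integral_sub (hf.const_mul c) (integrableOn_const (by simp))]
  rw [integral_const_mul, hf0, setIntegral_const]
  simp [Real.volume_Icc]
  ring

lemma int_mix_right (hg : IntegrableOn g (Set.Icc 0 1))
    (hg0 : (∫ x in Set.Icc (0:ℝ) 1, g x) = 0) :
    ∫ y in Set.Icc (1/2:ℝ) 1, mix c τ f g y = τ/2 := by
  rw [setIntegral_congr_fun measurableSet_Icc
    (g := fun y => c * g (2*y - 1) + τ) (fun y hy => by unfold mix; rw [if_neg (not_lt.mpr hy.1)])]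
  have : ∫ y in Set.Icc (1/2:ℝ) 1, (c * g (2*y - 1) + τ)
      = ∫ y in Set.Icc (1/2:ℝ) 1, (fun x => c * g x + τ) (2*y - 1) := rfl
  rw [this, integral_comp_right_half (fun x => c * g x + τ)]
  rw [integral_add (hg.const_mul c) (integrableOn_const (by simp))]
  rw [integral_const_mul, hg0, setIntegral_const]
  simp [Real.volume_Icc]
  ring

lemma icc_split : Set.Icc (0:ℝ) 1 = Set.Icc 0 (1/2) ∪ Set.Ioc (1/2) 1 := by
  ext y; simp only [Set.mem_union, Set.mem_Icc, Set.mem_Ioc]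
  constructor
  · rintro ⟨h1, h2⟩
    rcases le_or_gt y (1/2) with h | h
    · exact Or.inl ⟨h1, h⟩
    · exact Or.inr ⟨h, h2⟩
  · rintro (⟨h1, h2⟩ | ⟨h1, h2⟩) <;> constructor <;> linarith

lemma icc_split_disj : Disjoint (Set.Icc (0:ℝ) (1/2)) (Set.Ioc (1/2) 1) := by
  rw [Set.disjoint_left]
  intro a ha ha'
  exact absurd ha.2 (not_le.mpr ha'.1)

lemma mix_integral_zero (hf : IntegrableOn f (Set.Icc 0 1)) (hg : IntegrableOn g (Set.Icc 0 1))
    (hf0 : (∫ x in Set.Icc (0:ℝ) 1, f x) = 0) (hg0 : (∫ x in Set.Icc (0:ℝ) 1, g x) = 0) :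
    ∫ y in Set.Icc (0:ℝ) 1, mix c τ f g y = 0 := by
  rw [icc_split, setIntegral_union icc_split_disj measurableSet_Ioc (mix_intOn_left hf)
    ((mix_intOn_right hg).mono_set Set.Ioc_subset_Icc_self)]
  rw [← integral_Icc_eq_integral_Ioc, int_mix_left hf hf0, int_mix_right hg hg0]
  ring

lemma haar_intOn (n k : ℕ) : IntegrableOn (haar n k) (Set.Icc (0:ℝ) 1) := by
  rw [haar_eq_indicator]
  exact ((integrable_const (-1:ℝ)).indicator measurableSet_Ico).add
    ((integrable_const (1:ℝ)).indicator measurableSet_Ico)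

lemma intOn_mul_haar {F : ℝ → ℝ} (hF : IntegrableOn F (Set.Icc 0 1)) (n k : ℕ) :
    IntegrableOn (fun x => F x * haar n k x) (Set.Icc (0:ℝ) 1) := by
  have h1 : IntegrableOn (fun x => haar n k x * F x) (Set.Icc (0:ℝ) 1) := by
    refine Integrable.bdd_mul (c := 1) hF ((haar_measurable n k).aestronglyMeasurable) (Filter.Eventually.of_forall fun x => ?_)
    rw [Real.norm_eq_abs]
    exact haar_abs_le n k x
  have : (fun x => F x * haar n k x) = fun x => haar n k x * F x := funext fun x => mul_comm _ _
  rw [this]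
  exact h1

lemma cast_lt_pow {n k : ℕ} (hk : k < 2^n) : (k:ℝ) + 1 ≤ 2^n := by
  have : (k:ℝ) + 1 ≤ ((2^n : ℕ) : ℝ) := by exact_mod_cast Nat.succ_le_of_lt hk
  simpa using this

lemma mix_coeff_left (hf : IntegrableOn f (Set.Icc 0 1)) {n k : ℕ} (hk : k < 2^n) :
    haarCoeff (mix c τ f g) (n+1) k = c * haarCoeff f n k := by
  have pm : (0:ℝ) < 2^n := by positivity
  have hkr : (k:ℝ) + 1 ≤ 2^n := cast_lt_pow hk
  set G : ℝ → ℝ := fun x => (c * f x - τ) * haar n k x with hG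
  have hpt : ∀ y, mix c τ f g y * haar (n+1) k y = G (2*y) := by
    intro y
    rw [haar_comp_left]
    by_cases hy : y < 1/2
    · unfold mix; rw [if_pos hy]
    · have h2y : haar n k (2*y) = 0 := by
        apply haar_eq_zero_right
        rw [div_le_iff₀ pm] at *
        nlinarith [not_lt.mp hy]
      rw [mul_comm, h2y, zero_mul]
      simp only [hG, h2y, mul_zero]
  have hG1 : ∀ x : ℝ, 1 ≤ x → G x = 0 := by
    intro x hx
    have : haar n k x = 0 := by
      apply haar_eq_zero_right
      rw [div_le_iff₀ pm]
      nlinarith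
    simp [hG, this]
  have hGint : IntegrableOn G (Set.Icc (0:ℝ) 1) := by
    exact intOn_mul_haar ((hf.const_mul c).sub (integrableOn_const (by simp))) n k
  unfold haarCoeff
  have e1 : ∫ x in Set.Icc (0:ℝ) 1, mix c τ f g x * haar (n+1) k x
      = ∫ y in Set.Icc (0:ℝ) 1, G (2*y) := by
    exact integral_congr_ae (Filter.Eventually.of_forall (fun y => hpt y))
  rw [e1, integral_comp_big_left G hG1 hGint]
  have e2 : ∫ x in Set.Icc (0:ℝ) 1, G x
      = c * (∫ x in Set.Icc (0:ℝ) 1, f x * haar n k x) - τ * (∫ x in Set.Icc (0:ℝ) 1, haar n k x) := by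
    have : G = fun x => c * (f x * haar n k x) - τ * haar n k x := by
      funext x; simp only [hG]; ring
    rw [this, integral_sub ((intOn_mul_haar hf n k).const_mul c) ((haar_intOn n k).const_mul τ),
      integral_const_mul, integral_const_mul]
  rw [e2, integral_haar]
  rw [pow_succ]
  ring

lemma mix_coeff_right (hg : IntegrableOn g (Set.Icc 0 1)) {n k : ℕ} (hk : k < 2^n) :
    haarCoeff (mix c τ f g) (n+1) (k + 2^n) = c * haarCoeff g n k := by
  have pm : (0:ℝ) < 2^n := by positivity
  have hkr : (k:ℝ) + 1 ≤ 2^n := cast_lt_pow hk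
  set G : ℝ → ℝ := fun x => (c * g x + τ) * haar n k x with hG
  have hpt : ∀ y, mix c τ f g y * haar (n+1) (k + 2^n) y = G (2*y - 1) := by
    intro y
    rw [haar_comp_right]
    by_cases hy : y < 1/2
    · have h2y : haar n k (2*y - 1) = 0 := by
        apply haar_eq_zero_left
        have : (0:ℝ) ≤ (k:ℝ)/2^n := by positivity
        linarith
      rw [mul_comm, h2y, zero_mul]
      simp only [hG, h2y, mul_zero]
    · unfold mix; rw [if_neg hy]
  have hG0 : ∀ x : ℝ, x < 0 → G x = 0 := by
    intro x hx
    have : haar n k x = 0 := by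
      apply haar_eq_zero_left
      have : (0:ℝ) ≤ (k:ℝ)/2^n := by positivity
      linarith
    simp [hG, this]
  have hGint : IntegrableOn G (Set.Icc (0:ℝ) 1) := by
    exact intOn_mul_haar ((hg.const_mul c).add (integrableOn_const (by simp))) n k
  unfold haarCoeff
  have e1 : ∫ x in Set.Icc (0:ℝ) 1, mix c τ f g x * haar (n+1) (k + 2^n) x
      = ∫ y in Set.Icc (0:ℝ) 1, G (2*y - 1) := by
    exact integral_congr_ae (Filter.Eventually.of_forall (fun y => hpt y))
  rw [e1, integral_comp_big_right G hG0 hGint]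
  have e2 : ∫ x in Set.Icc (0:ℝ) 1, G x
      = c * (∫ x in Set.Icc (0:ℝ) 1, g x * haar n k x) + τ * (∫ x in Set.Icc (0:ℝ) 1, haar n k x) := by
    have : G = fun x => c * (g x * haar n k x) + τ * haar n k x := by
      funext x; simp only [hG]; ring
    rw [this, integral_add ((intOn_mul_haar hg n k).const_mul c) ((haar_intOn n k).const_mul τ),
      integral_const_mul, integral_const_mul]
  rw [e2, integral_haar]
  rw [pow_succ]
  ring

lemma haar00_left {y : ℝ} (h0 : 0 ≤ y) (h1 : y < 1/2) : haar 0 0 y = -1 := by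
  unfold haar
  rw [if_pos]
  simp only [Set.mem_Ico]
  norm_num
  exact ⟨h0, h1⟩

lemma haar00_right {y : ℝ} (h0 : 1/2 ≤ y) (h1 : y < 1) : haar 0 0 y = 1 := by
  unfold haar
  rw [if_neg, if_pos]
  · simp only [Set.mem_Ico]
    norm_num
    exact ⟨h0, h1⟩
  · simp only [Set.mem_Ico, not_and, not_lt]
    intro h
    norm_num
    exact h0

lemma mix_coeff_00 (hf : IntegrableOn f (Set.Icc 0 1)) (hg : IntegrableOn g (Set.Icc 0 1))
    (hf0 : (∫ x in Set.Icc (0:ℝ) 1, f x) = 0) (hg0 : (∫ x in Set.Icc (0:ℝ) 1, g x) = 0) :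
    haarCoeff (mix c τ f g) 0 0 = τ := by
  unfold haarCoeff
  have hint : IntegrableOn (fun x => mix c τ f g x * haar 0 0 x) (Set.Icc (0:ℝ) 1) :=
    intOn_mul_haar (mix_intOn hf hg) 0 0
  have hsplit : Set.Ico (0:ℝ) 1 = Set.Ico 0 (1/2) ∪ Set.Ico (1/2) 1 := by
    ext y; simp only [Set.mem_union, Set.mem_Ico]
    constructor
    · rintro ⟨ha, hb⟩
      rcases lt_or_ge y (1/2) with h | h
      · exact Or.inl ⟨ha, h⟩
      · exact Or.inr ⟨h, hb⟩
    · rintro (⟨ha, hb⟩ | ⟨ha, hb⟩) <;> constructor <;> linarith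
  have hdisj : Disjoint (Set.Ico (0:ℝ) (1/2)) (Set.Ico (1/2) 1) := by
    rw [Set.disjoint_left]
    intro a ha ha'
    exact absurd ha.2 (not_lt.mpr ha'.1)
  rw [integral_Icc_eq_integral_Ico, hsplit,
    setIntegral_union hdisj measurableSet_Ico
      ((hint.mono_set (fun y hy => ⟨hy.1, le_trans (le_of_lt hy.2) (by norm_num)⟩)))
      ((hint.mono_set (fun y hy => ⟨le_trans (by norm_num) hy.1, le_of_lt hy.2⟩)))]
  have e1 : ∫ y in Set.Ico (0:ℝ) (1/2), mix c τ f g y * haar 0 0 y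
      = ∫ y in Set.Ico (0:ℝ) (1/2), -(mix c τ f g y) := by
    refine setIntegral_congr_fun measurableSet_Ico (fun y hy => ?_)
    rw [haar00_left hy.1 hy.2]
    ring
  have e2 : ∫ y in Set.Ico (1/2:ℝ) 1, mix c τ f g y * haar 0 0 y
      = ∫ y in Set.Ico (1/2:ℝ) 1, mix c τ f g y := by
    refine setIntegral_congr_fun measurableSet_Ico (fun y hy => ?_)
    rw [haar00_right hy.1 hy.2]
    ring
  rw [e1, e2, integral_neg, ← integral_Icc_eq_integral_Ico, ← integral_Icc_eq_integral_Ico,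
    int_mix_left hf hf0, int_mix_right hg hg0]
  ring

lemma dyadicI00 {y : ℝ} (h0 : 0 ≤ y) (h1 : y ≤ 1) : (dyadicI 0 0).indicator (1 : ℝ → ℝ) y = 1 := by
  have : y ∈ dyadicI 0 0 := by
    unfold dyadicI
    simp only [Set.mem_Icc]
    norm_num
    exact ⟨h0, h1⟩
  rw [Set.indicator_of_mem this]
  rfl

lemma indicator_comp_left (n k : ℕ) (y : ℝ) :
    (dyadicI (n+1) k).indicator (1 : ℝ → ℝ) y = (dyadicI n k).indicator (1 : ℝ → ℝ) (2*y) := by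
  by_cases h : y ∈ dyadicI (n+1) k
  · rw [Set.indicator_of_mem h, Set.indicator_of_mem ((dyadicI_comp_left n k y).mp h)]
    rfl
  · rw [Set.indicator_of_notMem h,
      Set.indicator_of_notMem (fun hc => h ((dyadicI_comp_left n k y).mpr hc))]

lemma indicator_comp_right (n k : ℕ) (y : ℝ) :
    (dyadicI (n+1) (k + 2^n)).indicator (1 : ℝ → ℝ) y
      = (dyadicI n k).indicator (1 : ℝ → ℝ) (2*y - 1) := by
  by_cases h : y ∈ dyadicI (n+1) (k + 2^n)
  · rw [Set.indicator_of_mem h, Set.indicator_of_mem ((dyadicI_comp_right n k y).mp h)]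
    rfl
  · rw [Set.indicator_of_notMem h,
      Set.indicator_of_notMem (fun hc => h ((dyadicI_comp_right n k y).mpr hc))]

lemma sqFn_mix_left (hf : IntegrableOn f (Set.Icc 0 1)) (hg : IntegrableOn g (Set.Icc 0 1))
    (hf0 : (∫ x in Set.Icc (0:ℝ) 1, f x) = 0) (hg0 : (∫ x in Set.Icc (0:ℝ) 1, g x) = 0)
    (hc : c^2 + τ^2 = 1) {y : ℝ} (h0 : 0 ≤ y) (h2 : y < 1/2)
    (hSf : (∑' p : ℕ × ℕ, (haarCoeff f p.1 p.2)^2 * (dyadicI p.1 p.2).indicator 1 (2*y)) ≤ 1) :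
    sqFn (mix c τ f g) y ≤ 1 := by
  set A : ℕ × ℕ → ℝ :=
    fun p => (haarCoeff (mix c τ f g) p.1 p.2)^2 * (dyadicI p.1 p.2).indicator 1 y with hA
  set B : ℕ × ℕ → ℝ :=
    fun p => (haarCoeff f p.1 p.2)^2 * (dyadicI p.1 p.2).indicator 1 (2*y) with hB
  have main : (∑' p, A p) ≤ 1 := by
    by_cases hsum : Summable A
    · rw [hsum.tsum_eq_add_tsum_ite ((0,0) : ℕ × ℕ)]
      have h00 : A (0,0) = τ^2 := by
        simp only [hA]
        rw [mix_coeff_00 hf hg hf0 hg0, dyadicI00 h0 (by linarith), mul_one]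
      set A' : ℕ × ℕ → ℝ := fun p => if p = ((0,0) : ℕ × ℕ) then 0 else A p with hA'
      have he : ∀ p : ℕ × ℕ, A' (p.1 + 1, p.2) = c^2 * B p := by
        rintro ⟨n, k⟩
        have hne : ((n+1, k) : ℕ × ℕ) ≠ (0,0) := by simp
        simp only [hA', if_neg hne, hA, hB]
        rcases lt_or_ge k (2^n) with hk | hk
        · rw [mix_coeff_left hf hk, indicator_comp_left]
          ring
        · have hind : (dyadicI (n+1) k).indicator (1 : ℝ → ℝ) y = 0 := by
            refine Set.indicator_of_notMem (fun hc' => ?_) _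
            have hle : (k:ℝ)/2^(n+1) ≤ y := hc'.1
            have h2n : (2:ℝ)^(n+1) = 2*2^n := by rw [pow_succ]; ring
            have hk' : ((2:ℝ)^n) ≤ (k:ℝ) := by exact_mod_cast hk
            rw [div_le_iff₀ (by positivity), h2n] at hle
            nlinarith [pow_pos (show (0:ℝ) < 2 by norm_num) n]
          rw [hind, haarCoeff_zero f hk]
          ring
      have hinj : Function.Injective (fun p : ℕ × ℕ => ((p.1 + 1, p.2) : ℕ × ℕ)) := by
        rintro ⟨a, b⟩ ⟨a', b'⟩ hab
        simp only [Prod.mk.injEq] at hab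
        exact Prod.ext (by omega) hab.2
      have hsupp : Function.support A' ⊆ Set.range (fun p : ℕ × ℕ => ((p.1 + 1, p.2) : ℕ × ℕ)) := by
        rintro ⟨n, k⟩ hp
        match n with
        | 0 =>
          exfalso
          apply hp
          match k with
          | 0 => simp [hA']
          | k + 1 =>
            simp only [hA', hA]
            rw [if_neg (by simp)]
            have hind : (dyadicI 0 (k+1)).indicator (1 : ℝ → ℝ) y = 0 := by
              refine Set.indicator_of_notMem (fun hc' => ?_) _
              have hle : ((k+1 : ℕ):ℝ)/2^0 ≤ y := hc'.1
              push_cast at hle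
              norm_num at hle
              linarith
            rw [hind, mul_zero]
        | n + 1 => exact ⟨(n, k), rfl⟩
      have : ∑' p : ℕ × ℕ, (if p = ((0,0) : ℕ × ℕ) then 0 else A p) = c^2 * ∑' p, B p := by
        rw [show (fun p : ℕ × ℕ => if p = ((0,0) : ℕ × ℕ) then 0 else A p) = A' from rfl]
        rw [← hinj.tsum_eq hsupp]
        simp only [he]
        exact tsum_mul_left
      rw [h00, this]
      have hc2 : (0:ℝ) ≤ c^2 := sq_nonneg c
      nlinarith
    · rw [tsum_eq_zero_of_not_summable hsum]
      norm_num
  unfold sqFn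
  calc Real.sqrt (∑' p : ℕ × ℕ, (haarCoeff (mix c τ f g) p.1 p.2)^2 * (dyadicI p.1 p.2).indicator 1 y)
      ≤ Real.sqrt 1 := Real.sqrt_le_sqrt main
    _ = 1 := Real.sqrt_one

lemma sqFn_mix_right (hf : IntegrableOn f (Set.Icc 0 1)) (hg : IntegrableOn g (Set.Icc 0 1))
    (hf0 : (∫ x in Set.Icc (0:ℝ) 1, f x) = 0) (hg0 : (∫ x in Set.Icc (0:ℝ) 1, g x) = 0)
    (hc : c^2 + τ^2 = 1) {y : ℝ} (h0 : 1/2 < y) (h2 : y ≤ 1)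
    (hSg : (∑' p : ℕ × ℕ, (haarCoeff g p.1 p.2)^2 * (dyadicI p.1 p.2).indicator 1 (2*y - 1)) ≤ 1) :
    sqFn (mix c τ f g) y ≤ 1 := by
  set A : ℕ × ℕ → ℝ :=
    fun p => (haarCoeff (mix c τ f g) p.1 p.2)^2 * (dyadicI p.1 p.2).indicator 1 y with hA
  set B : ℕ × ℕ → ℝ :=
    fun p => (haarCoeff g p.1 p.2)^2 * (dyadicI p.1 p.2).indicator 1 (2*y - 1) with hB
  set e : ℕ × ℕ → ℕ × ℕ := fun p => (p.1 + 1, p.2 + 2^p.1) with hE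
  have main : (∑' p, A p) ≤ 1 := by
    by_cases hsum : Summable A
    · rw [hsum.tsum_eq_add_tsum_ite ((0,0) : ℕ × ℕ)]
      have h00 : A (0,0) = τ^2 := by
        simp only [hA]
        rw [mix_coeff_00 hf hg hf0 hg0, dyadicI00 (by linarith) h2, mul_one]
      set A' : ℕ × ℕ → ℝ := fun p => if p = ((0,0) : ℕ × ℕ) then 0 else A p with hA'
      have he : ∀ p : ℕ × ℕ, A' (e p) = c^2 * B p := by
        rintro ⟨n, k⟩
        have hne : ((n+1, k + 2^n) : ℕ × ℕ) ≠ (0,0) := by simp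
        simp only [hE, hA', if_neg hne, hA, hB]
        rcases lt_or_ge k (2^n) with hk | hk
        · rw [mix_coeff_right hg hk, indicator_comp_right]
          ring
        · rw [haarCoeff_zero (mix c τ f g) (n := n+1) (by rw [pow_succ]; omega),
            haarCoeff_zero g hk]
          ring
      have hinj : Function.Injective e := by
        rintro ⟨a, b⟩ ⟨a', b'⟩ hab
        simp only [hE, Prod.mk.injEq] at hab
        have ha : a = a' := by omega
        subst ha
        exact Prod.ext rfl (by omega)
      have hsupp : Function.support A' ⊆ Set.range e := by
        rintro ⟨n, k⟩ hp
        match n with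
        | 0 =>
          exfalso
          apply hp
          match k with
          | 0 => simp [hA']
          | k + 1 =>
            simp only [hA', hA]
            rw [if_neg (by simp)]
            rw [haarCoeff_zero (mix c τ f g) (n := 0) (by omega)]
            ring
        | n + 1 =>
          rcases lt_or_ge k (2^n) with hk | hk
          · exfalso
            apply hp
            simp only [hA', hA]
            rw [if_neg (by simp)]
            have hind : (dyadicI (n+1) k).indicator (1 : ℝ → ℝ) y = 0 := by
              refine Set.indicator_of_notMem (fun hc' => ?_) _
              have hle : y ≤ ((k:ℝ)+1)/2^(n+1) := hc'.2
              have h2n : (2:ℝ)^(n+1) = 2*2^n := by rw [pow_succ]; ring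
              have hk' : ((k:ℝ)+1) ≤ (2:ℝ)^n := cast_lt_pow hk
              rw [le_div_iff₀ (by positivity), h2n] at hle
              nlinarith [pow_pos (show (0:ℝ) < 2 by norm_num) n]
            rw [hind, mul_zero]
          · exact ⟨(n, k - 2^n), by simp only [hE]; exact Prod.ext rfl (by omega)⟩
      have : ∑' p : ℕ × ℕ, (if p = ((0,0) : ℕ × ℕ) then 0 else A p) = c^2 * ∑' p, B p := by
        rw [show (fun p : ℕ × ℕ => if p = ((0,0) : ℕ × ℕ) then 0 else A p) = A' from rfl]
        rw [← hinj.tsum_eq hsupp]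
        simp only [he]
        exact tsum_mul_left
      rw [h00, this]
      have hc2 : (0:ℝ) ≤ c^2 := sq_nonneg c
      nlinarith
    · rw [tsum_eq_zero_of_not_summable hsum]
      norm_num
  unfold sqFn
  calc Real.sqrt (∑' p : ℕ × ℕ, (haarCoeff (mix c τ f g) p.1 p.2)^2 * (dyadicI p.1 p.2).indicator 1 y)
      ≤ Real.sqrt 1 := Real.sqrt_le_sqrt main
    _ = 1 := Real.sqrt_one

lemma tsum_le_of_sqFn_ae {F : ℝ → ℝ}
    (h : ∀ᵐ x ∂(volume.restrict (Set.Icc (0 : ℝ) 1)), sqFn F x ≤ 1) :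
    ∀ᵐ x ∂(volume : Measure ℝ), x ∈ Set.Icc (0:ℝ) 1 →
      (∑' p : ℕ × ℕ, (haarCoeff F p.1 p.2)^2 * (dyadicI p.1 p.2).indicator 1 x) ≤ 1 := by
  rw [← ae_restrict_iff' measurableSet_Icc]
  filter_upwards [h] with x hx
  have hT : (0:ℝ) ≤ ∑' p : ℕ × ℕ, (haarCoeff F p.1 p.2)^2 * (dyadicI p.1 p.2).indicator 1 x :=
    tsum_nonneg (fun p => mul_nonneg (sq_nonneg _) (Set.indicator_nonneg (fun _ _ => zero_le_one) _))
  unfold sqFn at hx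
  nlinarith [Real.sq_sqrt hT, Real.sqrt_nonneg
    (∑' p : ℕ × ℕ, (haarCoeff F p.1 p.2)^2 * (dyadicI p.1 p.2).indicator 1 x)]

lemma mix_sqFn_ae (hf : Admissible f) (hg : Admissible g) (hc : c^2 + τ^2 = 1) :
    ∀ᵐ y ∂(volume.restrict (Set.Icc (0 : ℝ) 1)), sqFn (mix c τ f g) y ≤ 1 := by
  obtain ⟨hfi, hf0, hfs⟩ := hf
  obtain ⟨hgi, hg0, hgs⟩ := hg
  rw [ae_restrict_iff' measurableSet_Icc]
  have hNf := tsum_le_of_sqFn_ae hfs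
  have hNg := tsum_le_of_sqFn_ae hgs
  rw [ae_iff] at hNf hNg ⊢
  set Nf := {x : ℝ | ¬(x ∈ Set.Icc (0:ℝ) 1 →
    (∑' p : ℕ × ℕ, (haarCoeff f p.1 p.2)^2 * (dyadicI p.1 p.2).indicator 1 x) ≤ 1)} with hNfdef
  set Ng := {x : ℝ | ¬(x ∈ Set.Icc (0:ℝ) 1 →
    (∑' p : ℕ × ℕ, (haarCoeff g p.1 p.2)^2 * (dyadicI p.1 p.2).indicator 1 x) ≤ 1)} with hNgdef
  have hsub : {y : ℝ | ¬(y ∈ Set.Icc (0:ℝ) 1 → sqFn (mix c τ f g) y ≤ 1)}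
      ⊆ ((fun y : ℝ => 2*y + 0) ⁻¹' Nf) ∪ ((fun y : ℝ => 2*y + (-1)) ⁻¹' Ng) ∪ {(1/2 : ℝ)} := by
    intro y hy
    simp only [Set.mem_setOf_eq, _root_.not_imp] at hy
    obtain ⟨hmem, hbad⟩ := hy
    by_cases hhalf : y = 1/2
    · exact Or.inr (by simp [hhalf])
    rcases lt_or_gt_of_ne hhalf with hlt | hgt
    · left; left
      simp only [Set.mem_preimage, hNfdef, Set.mem_setOf_eq, _root_.not_imp]
      refine ⟨?_, fun hTle => ?_⟩
      · rw [add_zero]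
        exact ⟨by linarith [hmem.1], by linarith⟩
      · rw [add_zero] at hTle
        exact hbad (sqFn_mix_left hfi hgi hf0 hg0 hc hmem.1 hlt hTle)
    · left; right
      simp only [Set.mem_preimage, hNgdef, Set.mem_setOf_eq, _root_.not_imp]
      refine ⟨?_, fun hTle => ?_⟩
      · constructor <;> [linarith; linarith [hmem.2]]
      · have h21 : 2*y + (-1) = 2*y - 1 := by ring
        rw [h21] at hTle
        exact hbad (sqFn_mix_right hfi hgi hf0 hg0 hc hgt hmem.2 hTle)
  refine measure_mono_null hsub ?_
  refine measure_union_null (measure_union_null ?_ ?_) (Real.volume_singleton)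
  · rw [vol_preimage 0 Nf, hNf]
    simp
  · rw [vol_preimage (-1) Ng, hNg]
    simp

lemma mix_admissible (hf : Admissible f) (hg : Admissible g) (hc : c^2 + τ^2 = 1) :
    Admissible (mix c τ f g) :=
  ⟨mix_intOn hf.1 hg.1, mix_integral_zero hf.1 hg.1 hf.2.1 hg.2.1, mix_sqFn_ae hf hg hc⟩

lemma mix_measure (hcpos : 0 < c) (x : ℝ) :
    volume {y ∈ Set.Icc (0:ℝ) 1 | x ≤ mix c τ f g y}
      = volume {z ∈ Set.Icc (0:ℝ) 1 | (x+τ)/c ≤ f z} / 2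
        + volume {z ∈ Set.Icc (0:ℝ) 1 | (x-τ)/c ≤ g z} / 2 := by
  set D := {y ∈ Set.Icc (0:ℝ) 1 | x ≤ mix c τ f g y} with hD
  set Sf := {z ∈ Set.Icc (0:ℝ) 1 | (x+τ)/c ≤ f z} with hSf
  set Sg := {z ∈ Set.Icc (0:ℝ) 1 | (x-τ)/c ≤ g z} with hSg
  set Sf' := {z : ℝ | 0 ≤ z ∧ z < 1 ∧ (x+τ)/c ≤ f z} with hSf'
  have hsplit : volume (D ∩ Set.Ico 0 (1/2)) + volume (D \ Set.Ico 0 (1/2)) = volume D :=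
    measure_inter_add_diff D measurableSet_Ico
  have hleft : D ∩ Set.Ico 0 (1/2) = (fun y : ℝ => 2*y + 0) ⁻¹' Sf' := by
    ext y
    simp only [hD, hSf', Set.mem_inter_iff, Set.mem_sep_iff, Set.mem_Ico, Set.mem_Icc,
      Set.mem_preimage, Set.mem_setOf_eq, add_zero]
    constructor
    · rintro ⟨⟨_, hx⟩, h0, h12⟩
      have hmix : mix c τ f g y = c * f (2*y) - τ := by
        unfold mix; rw [if_pos h12]
      rw [hmix] at hx
      refine ⟨by linarith, by linarith, ?_⟩
      rw [div_le_iff₀ hcpos]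
      nlinarith
    · rintro ⟨h0, h1, hx⟩
      rw [div_le_iff₀ hcpos] at hx
      have h12 : y < 1/2 := by linarith
      have hmix : mix c τ f g y = c * f (2*y) - τ := by
        unfold mix; rw [if_pos h12]
      exact ⟨⟨⟨by linarith, by linarith⟩, by rw [hmix]; nlinarith⟩, by linarith, h12⟩
  have hright : D \ Set.Ico 0 (1/2) = (fun y : ℝ => 2*y + (-1)) ⁻¹' Sg := by
    ext y
    simp only [hD, hSg, Set.mem_diff, Set.mem_sep_iff, Set.mem_Ico, Set.mem_Icc,
      Set.mem_preimage, Set.mem_setOf_eq, not_and, not_lt]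
    constructor
    · rintro ⟨⟨⟨hy0, hy1⟩, hx⟩, hge⟩
      have h12 : 1/2 ≤ y := hge hy0
      have hmix : mix c τ f g y = c * g (2*y - 1) + τ := by
        unfold mix; rw [if_neg (not_lt.mpr h12)]
      rw [hmix] at hx
      refine ⟨⟨by linarith, by linarith⟩, ?_⟩
      rw [div_le_iff₀ hcpos]
      have h21 : 2*y + (-1) = 2*y - 1 := by ring
      rw [h21]
      nlinarith
    · rintro ⟨⟨h0, h1⟩, hx⟩
      have h12 : 1/2 ≤ y := by linarith
      have hmix : mix c τ f g y = c * g (2*y - 1) + τ := by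
        unfold mix; rw [if_neg (not_lt.mpr h12)]
      rw [div_le_iff₀ hcpos] at hx
      have h21 : 2*y + (-1) = 2*y - 1 := by ring
      rw [h21] at hx
      refine ⟨⟨⟨by linarith, by linarith⟩, ?_⟩, fun _ => h12⟩
      rw [hmix]
      nlinarith
  have hSfeq : volume Sf' = volume Sf := by
    apply le_antisymm
    · apply measure_mono
      intro z hz
      exact ⟨⟨hz.1, le_of_lt hz.2.1⟩, hz.2.2⟩
    · have : Sf ⊆ Sf' ∪ {(1:ℝ)} := by
        intro z hz
        rcases lt_or_ge z 1 with h | h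
        · exact Or.inl ⟨hz.1.1, h, hz.2⟩
        · exact Or.inr (le_antisymm hz.1.2 h)
      calc volume Sf ≤ volume (Sf' ∪ {(1:ℝ)}) := measure_mono this
        _ ≤ volume Sf' + volume {(1:ℝ)} := measure_union_le _ _
        _ = volume Sf' := by rw [Real.volume_singleton, add_zero]
  rw [← hsplit, hleft, hright, vol_preimage, vol_preimage, hSfeq]

end mixlemmas

lemma zero_admissible : Admissible (fun _ => (0:ℝ)) := by
  refine ⟨integrableOn_zero, by simp, ?_⟩
  have hc : ∀ n k : ℕ, haarCoeff (fun _ => (0:ℝ)) n k = 0 := by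
    intro n k
    unfold haarCoeff
    simp
  refine Filter.Eventually.of_forall (fun x => ?_)
  unfold sqFn
  have : ∀ p : ℕ × ℕ, (haarCoeff (fun _ => (0:ℝ)) p.1 p.2)^2 * (dyadicI p.1 p.2).indicator 1 x = 0 := by
    intro p
    rw [hc p.1 p.2]
    ring
  rw [tsum_congr this, tsum_zero, Real.sqrt_zero]
  norm_num

lemma bellman_set_nonempty (t : ℝ) :
    {m : ℝ | ∃ f : ℝ → ℝ, Admissible f ∧
      m = (volume { y ∈ Set.Icc (0 : ℝ) 1 | t ≤ f y }).toReal}.Nonempty :=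
  ⟨_, ⟨fun _ => (0:ℝ), zero_admissible, rfl⟩⟩

lemma bellman_set_bdd (t : ℝ) :
    ∀ m ∈ {m : ℝ | ∃ f : ℝ → ℝ, Admissible f ∧
      m = (volume { y ∈ Set.Icc (0 : ℝ) 1 | t ≤ f y }).toReal}, m ≤ 1 := by
  rintro m ⟨f, _, rfl⟩
  have hle : volume { y ∈ Set.Icc (0 : ℝ) 1 | t ≤ f y } ≤ ENNReal.ofReal 1 := by
    calc volume { y ∈ Set.Icc (0 : ℝ) 1 | t ≤ f y } ≤ volume (Set.Icc (0:ℝ) 1) :=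
        measure_mono (Set.sep_subset _ _)
      _ = ENNReal.ofReal 1 := by rw [Real.volume_Icc]; norm_num
  exact ENNReal.toReal_le_of_le_ofReal zero_le_one hle

lemma vol_ne_top (P : ℝ → Prop) :
    volume { y ∈ Set.Icc (0 : ℝ) 1 | P y } ≠ ⊤ := by
  refine ne_top_of_le_ne_top ?_ (measure_mono (Set.sep_subset _ _))
  rw [Real.volume_Icc]
  exact ENNReal.ofReal_ne_top

theorem bellman_inequality :
    ∀ x : ℝ, ∀ τ ∈ Set.Ioo (-1 : ℝ) 1,
      (bellman (XX x (-τ)) + bellman (XX x τ)) / 2 ≤ bellman x := by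
  intro x τ hτ
  set c := Real.sqrt (1 - τ^2) with hcdef
  have h1τ : 0 < 1 - τ^2 := by nlinarith [hτ.1, hτ.2]
  have hcpos : 0 < c := Real.sqrt_pos.mpr h1τ
  have hc2 : c^2 = 1 - τ^2 := Real.sq_sqrt (le_of_lt h1τ)
  have hc : c^2 + τ^2 = 1 := by rw [hc2]; ring
  have hXm : XX x (-τ) = (x - τ)/c := by
    unfold XX
    rw [neg_sq, ← hcdef]
    ring_nf
  have hXp : XX x τ = (x + τ)/c := rfl
  set A := {m : ℝ | ∃ f : ℝ → ℝ, Admissible f ∧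
    m = (volume { y ∈ Set.Icc (0 : ℝ) 1 | XX x (-τ) ≤ f y }).toReal} with hAdef
  set B := {m : ℝ | ∃ f : ℝ → ℝ, Admissible f ∧
    m = (volume { y ∈ Set.Icc (0 : ℝ) 1 | XX x τ ≤ f y }).toReal} with hBdef
  set C := {m : ℝ | ∃ f : ℝ → ℝ, Admissible f ∧
    m = (volume { y ∈ Set.Icc (0 : ℝ) 1 | x ≤ f y }).toReal} with hCdef
  have key : ∀ a ∈ A, ∀ b ∈ B, (a + b)/2 ∈ C := by
    rintro a ⟨F, hF, rfl⟩ b ⟨G, hG, rfl⟩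
    refine ⟨mix c τ G F, mix_admissible hG hF hc, ?_⟩
    rw [mix_measure hcpos x, ← hXp, ← hXm]
    rw [ENNReal.toReal_add, ENNReal.toReal_div, ENNReal.toReal_div]
    · simp only [ENNReal.toReal_ofNat]
      ring
    · exact (ENNReal.div_lt_top (vol_ne_top _) (by norm_num)).ne
    · exact (ENNReal.div_lt_top (vol_ne_top _) (by norm_num)).ne
  have hAne : A.Nonempty := bellman_set_nonempty _
  have hBne : B.Nonempty := bellman_set_nonempty _
  have hCbdd : BddAbove C := ⟨1, fun m hm => bellman_set_bdd _ m hm⟩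
  have hstep : ∀ b ∈ B, sSup A ≤ 2 * sSup C - b := by
    intro b hb
    refine csSup_le hAne (fun a ha => ?_)
    have := le_csSup hCbdd (key a ha b hb)
    linarith
  have hstep2 : sSup B ≤ 2 * sSup C - sSup A := by
    refine csSup_le hBne (fun b hb => ?_)
    linarith [hstep b hb]
  show (sSup A + sSup B) / 2 ≤ sSup C
  linarith
end
end

section
/- 𝓑(1) = 1/2. -/
open MeasureTheory

noncomputable section

namespace BP

open Set Filter Metric

/-- half-open dyadic interval -/
def J (n k : ℕ) : Set ℝ := Set.Ico ((k:ℝ)/2^n) (((k:ℝ)+1)/2^n)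

lemma J_subset {n k : ℕ} (hk : k < 2^n) : J n k ⊆ Set.Ico (0:ℝ) 1 := by
  intro x hx
  obtain ⟨h1, h2⟩ := hx
  constructor
  · exact le_trans (by positivity) h1
  · refine lt_of_lt_of_le h2 ?_
    rw [div_le_one (by positivity)]
    have : (k:ℝ) + 1 ≤ (2:ℝ)^n := by
      have : (k + 1 : ℕ) ≤ 2^n := hk
      exact_mod_cast this
    simpa using this

lemma volume_J (n k : ℕ) : volume (J n k) = ENNReal.ofReal ((2^n : ℝ)⁻¹) := by
  rw [J, Real.volume_Ico]
  congr 1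
  field_simp
  ring

lemma measurableSet_J (n k : ℕ) : MeasurableSet (J n k) := measurableSet_Ico

/-- index of the level-n interval containing x -/
def idx (n : ℕ) (x : ℝ) : ℕ := ⌊(2:ℝ)^n * x⌋₊

lemma mem_J_idx {x : ℝ} (hx : x ∈ Set.Ico (0:ℝ) 1) (n : ℕ) : x ∈ J n (idx n x) := by
  have h2 : (0:ℝ) < 2^n := by positivity
  have hx0 : (0:ℝ) ≤ 2^n * x := by nlinarith [hx.1]
  constructor
  · rw [div_le_iff₀ h2, mul_comm]
    exact Nat.floor_le hx0
  · rw [lt_div_iff₀ h2, mul_comm]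
    exact Nat.lt_floor_add_one _

lemma idx_lt {x : ℝ} (hx : x ∈ Set.Ico (0:ℝ) 1) (n : ℕ) : idx n x < 2^n := by
  have hp : (0:ℝ) < 2^n := by positivity
  have h : (2:ℝ)^n * x < ((2^n : ℕ) : ℝ) := by
    push_cast
    nlinarith [hx.2]
  exact (Nat.floor_lt (by nlinarith [hx.1])).2 h

lemma eq_idx_of_mem {x : ℝ} {n k : ℕ} (hx : x ∈ J n k) : k = idx n x := by
  have h2 : (0:ℝ) < 2^n := by positivity
  have h1 : (k:ℝ) ≤ 2^n * x := by rw [mul_comm, ← div_le_iff₀ h2]; exact hx.1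
  have h2' : (2:ℝ)^n * x < k + 1 := by rw [mul_comm, ← lt_div_iff₀ h2]; exact hx.2
  symm
  rw [idx, Nat.floor_eq_iff (le_trans (Nat.cast_nonneg k) h1)]
  exact ⟨h1, by exact_mod_cast h2'⟩

lemma idx_succ_div_two {x : ℝ} (n : ℕ) : idx (n+1) x / 2 = idx n x := by
  rw [idx, idx, ← Nat.floor_div_natCast]
  congr 1
  rw [pow_succ]
  ring

lemma J_succ_subset_left {n k : ℕ} : J (n+1) (2*k) ⊆ J n k := by
  intro x hx
  obtain ⟨h1, h2⟩ := hx
  push_cast at h1 h2 ⊢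
  constructor
  · refine le_trans (le_of_eq ?_) h1
    rw [pow_succ]; field_simp
  · refine lt_of_lt_of_le h2 ?_
    rw [pow_succ, div_le_div_iff₀ (by positivity) (by positivity)]
    ring_nf
    nlinarith [pow_pos (by norm_num : (0:ℝ)<2) n]

-- appended after part0 content (inside namespace BP)
lemma J_succ_subset_right {n k : ℕ} : J (n+1) (2*k+1) ⊆ J n k := by
  intro x hx
  obtain ⟨h1, h2⟩ := hx
  push_cast at h1 h2 ⊢
  constructor
  · refine le_trans ?_ h1
    rw [pow_succ, div_le_div_iff₀ (by positivity) (by positivity)]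
    nlinarith [pow_pos (by norm_num : (0:ℝ)<2) n]
  · refine lt_of_lt_of_le h2 (le_of_eq ?_)
    rw [pow_succ]; field_simp; ring

lemma J_step {n j : ℕ} : J (n+1) j ⊆ J n (j/2) := by
  rcases Nat.even_or_odd j with ⟨m, hm⟩ | ⟨m, hm⟩
  · subst hm
    have e : m + m = 2*m := (two_mul m).symm
    rw [e, Nat.mul_div_cancel_left _ (by norm_num : 0 < 2)]
    exact J_succ_subset_left
  · subst hm
    have : (2 * m + 1) / 2 = m := by omega
    rw [this]
    exact J_succ_subset_right

lemma J_chain (m n k : ℕ) : J (m+n) k ⊆ J m (k / 2^n) := by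
  induction n generalizing k with
  | zero => simp
  | succ n ih =>
    have h1 : J (m+n+1) k ⊆ J (m+n) (k/2) := J_step
    have h2 : J (m+n) (k/2) ⊆ J m (k/2/2^n) := ih (k/2)
    have : k/2/2^n = k/2^(n+1) := by
      rw [Nat.div_div_eq_div_mul, pow_succ']
    rw [← this]
    exact h1.trans h2

lemma Jleft_eq (n k : ℕ) :
    J (n+1) (2*k) = Set.Ico ((k:ℝ)/2^n) ((2*(k:ℝ)+1)/2^(n+1)) := by
  unfold J
  have e1 : ((2*k : ℕ):ℝ)/2^(n+1) = (k:ℝ)/2^n := by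
    push_cast; rw [pow_succ]; field_simp
  have e2 : ((2*k : ℕ):ℝ)+1 = 2*(k:ℝ)+1 := by push_cast; ring
  rw [e1, e2]

lemma Jright_eq (n k : ℕ) :
    J (n+1) (2*k+1) = Set.Ico ((2*(k:ℝ)+1)/2^(n+1)) (((k:ℝ)+1)/2^n) := by
  unfold J
  have e3 : ((2*k+1 : ℕ):ℝ) = 2*(k:ℝ)+1 := by push_cast; ring
  have e4 : (2*(k:ℝ)+1+1)/2^(n+1) = ((k:ℝ)+1)/2^n := by
    rw [pow_succ]; field_simp; ring
  rw [e3, e4]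

lemma haar_apply (n k : ℕ) (x : ℝ) :
    haar n k x = (J (n+1) (2*k+1)).indicator 1 x - (J (n+1) (2*k)).indicator 1 x := by
  rw [haar, Jright_eq, Jleft_eq]
  by_cases h1 : x ∈ Set.Ico ((k:ℝ)/2^n) ((2*(k:ℝ)+1)/2^(n+1))
  · have h2 : x ∉ Set.Ico ((2*(k:ℝ)+1)/2^(n+1)) (((k:ℝ)+1)/2^n) :=
      fun h => absurd h1.2 (not_lt.2 h.1)
    simp [h1, h2]
  · by_cases h2 : x ∈ Set.Ico ((2*(k:ℝ)+1)/2^(n+1)) (((k:ℝ)+1)/2^n)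
    · simp [h1, h2]
    · simp [h1, h2]

lemma indicator_J_integrable {n k : ℕ} (c : ℝ) (μ : Measure ℝ) (hμ : μ ≤ volume) :
    Integrable ((J n k).indicator (fun _ => c)) μ := by
  refine Integrable.mono_measure ?_ hμ
  rw [integrable_indicator_iff (measurableSet_J n k)]
  exact integrableOn_const (by rw [volume_J]; exact ENNReal.ofReal_ne_top)

/-- step function machinery -/
def stepF (n : ℕ) (w : ℕ → ℝ) (x : ℝ) : ℝ :=
  ∑ k ∈ Finset.range (2^n), (J n k).indicator (fun _ => w k) x

lemma stepF_eval {x : ℝ} (hx : x ∈ Set.Ico (0:ℝ) 1) (n : ℕ) (w : ℕ → ℝ) :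
    stepF n w x = w (idx n x) := by
  rw [stepF, Finset.sum_eq_single (idx n x)]
  · exact Set.indicator_of_mem (mem_J_idx hx n) _
  · intro k _ hk
    exact Set.indicator_of_notMem (fun hm => hk (eq_idx_of_mem hm)) _
  · intro h
    exact absurd (Finset.mem_range.2 (idx_lt hx n)) h

lemma stepF_integrable (n : ℕ) (w : ℕ → ℝ) (μ : Measure ℝ) (hμ : μ ≤ volume) :
    Integrable (stepF n w) μ :=
  integrable_finset_sum _ (fun k _ => indicator_J_integrable (w k) μ hμ)

lemma stepF_measurable (n : ℕ) (w : ℕ → ℝ) : Measurable (stepF n w) :=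
  Finset.measurable_sum _ (fun k _ => (measurable_const).indicator (measurableSet_J n k))

lemma stepF_nonneg {n : ℕ} {w : ℕ → ℝ} (hw : ∀ k, 0 ≤ w k) (x : ℝ) : 0 ≤ stepF n w x :=
  Finset.sum_nonneg fun k _ => Set.indicator_nonneg (fun _ _ => hw k) x

lemma setIntegral_stepF (n : ℕ) (w : ℕ → ℝ) :
    ∫ x in Set.Ico (0:ℝ) 1, stepF n w x = ∑ k ∈ Finset.range (2^n), w k * ((2:ℝ)^n)⁻¹ := by
  unfold stepF
  rw [integral_finset_sum _ (fun k _ =>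
    (indicator_J_integrable (w k) _ Measure.restrict_le_self))]
  refine Finset.sum_congr rfl (fun k hk => ?_)
  rw [setIntegral_indicator (measurableSet_J n k),
    Set.inter_eq_self_of_subset_right (J_subset (Finset.mem_range.1 hk))]
  rw [setIntegral_const, measureReal_def, volume_J, ENNReal.toReal_ofReal (by positivity)]
  rw [smul_eq_mul, mul_comm]
lemma ae_ne_one : ∀ᵐ x ∂(volume.restrict (Set.Icc (0:ℝ) 1)), x ≠ 1 := by
  refine ae_iff.2 ?_
  have h1 : {x : ℝ | ¬ x ≠ 1} = {1} := by ext x; simp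
  rw [h1]
  exact le_antisymm (le_trans (Measure.restrict_apply_le _ _)
    (le_of_eq Real.volume_singleton)) (zero_le)

lemma haar_zero_of_lt {n k : ℕ} {x : ℝ} (hx : x < (k:ℝ)/2^n) : haar n k x = 0 := by
  rw [haar, if_neg, if_neg]
  · rintro ⟨h, -⟩
    have : (k:ℝ)/2^n ≤ (2*(k:ℝ)+1)/2^(n+1) := by
      rw [pow_succ, div_le_div_iff₀ (by positivity) (by positivity)]
      nlinarith [pow_pos (by norm_num : (0:ℝ)<2) n]
    linarith
  · rintro ⟨h, -⟩
    linarith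

lemma haarCoeff_zero_of_ge (f : ℝ → ℝ) {n k : ℕ} (hk : 2^n ≤ k) :
    haarCoeff f n k = 0 := by
  rw [haarCoeff]
  have h : ∀ᵐ x ∂(volume.restrict (Set.Icc (0:ℝ) 1)), f x * haar n k x = 0 := by
    filter_upwards [ae_restrict_mem measurableSet_Icc, ae_ne_one] with x hx hne
    have hx1 : x < 1 := lt_of_le_of_ne hx.2 hne
    have hk' : (1:ℝ) ≤ (k:ℝ)/2^n := by
      rw [le_div_iff₀ (by positivity)]
      have : ((2^n : ℕ):ℝ) ≤ (k:ℝ) := by exact_mod_cast hk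
      push_cast at this
      linarith
    rw [haar_zero_of_lt (lt_of_lt_of_le hx1 hk'), mul_zero]
  rw [integral_congr_ae h, integral_zero, mul_zero]

lemma haarCoeff_eq (f : ℝ → ℝ) (hf : IntegrableOn f (Set.Icc 0 1)) {n k : ℕ}
    (hk : k < 2^n) :
    haarCoeff f n k
      = 2^n * ((∫ x in J (n+1) (2*k+1), f x) - ∫ x in J (n+1) (2*k), f x) := by
  rw [haarCoeff]
  congr 1
  have hpt : ∀ x, f x * haar n k x
      = (J (n+1) (2*k+1)).indicator f x - (J (n+1) (2*k)).indicator f x := by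
    intro x
    rw [haar_apply]
    by_cases ha : x ∈ J (n+1) (2*k+1) <;> by_cases hb : x ∈ J (n+1) (2*k) <;>
      simp [Set.indicator_apply, ha, hb]
  have h1 : Integrable ((J (n+1) (2*k+1)).indicator f) (volume.restrict (Set.Icc 0 1)) :=
    hf.indicator (measurableSet_J _ _)
  have h2 : Integrable ((J (n+1) (2*k)).indicator f) (volume.restrict (Set.Icc 0 1)) :=
    hf.indicator (measurableSet_J _ _)
  calc ∫ x in Set.Icc (0:ℝ) 1, f x * haar n k x
      = ∫ x in Set.Icc (0:ℝ) 1,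
          ((J (n+1) (2*k+1)).indicator f x - (J (n+1) (2*k)).indicator f x) := by
        exact integral_congr_ae (Filter.Eventually.of_forall hpt)
    _ = (∫ x in Set.Icc (0:ℝ) 1, (J (n+1) (2*k+1)).indicator f x)
          - ∫ x in Set.Icc (0:ℝ) 1, (J (n+1) (2*k)).indicator f x := integral_sub h1 h2
    _ = (∫ x in J (n+1) (2*k+1), f x) - ∫ x in J (n+1) (2*k), f x := by
        rw [setIntegral_indicator (measurableSet_J _ _),
          setIntegral_indicator (measurableSet_J _ _)]
        have s1 : Set.Icc (0:ℝ) 1 ∩ J (n+1) (2*k+1) = J (n+1) (2*k+1) :=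
          Set.inter_eq_self_of_subset_right
            ((J_subset (by omega : 2*k+1 < 2^(n+1))).trans Set.Ico_subset_Icc_self)
        have s2 : Set.Icc (0:ℝ) 1 ∩ J (n+1) (2*k) = J (n+1) (2*k) :=
          Set.inter_eq_self_of_subset_right
            ((J_subset (by omega : 2*k < 2^(n+1))).trans Set.Ico_subset_Icc_self)
        rw [s1, s2]


lemma not_mem_J_of_mem {n k k' : ℕ} {x : ℝ} (h : x ∈ J n k) (hne : k' ≠ k) :
    x ∉ J n k' := fun h' => hne ((eq_idx_of_mem h').trans (eq_idx_of_mem h).symm)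

lemma haar00_apply (x : ℝ) :
    haar 0 0 x = (J 1 1).indicator 1 x - (J 1 0).indicator 1 x := by
  have := haar_apply 0 0 x
  norm_num at this
  exact this

lemma haar00_right {x : ℝ} (hx : x ∈ J 1 1) : haar 0 0 x = 1 := by
  rw [haar00_apply, Set.indicator_of_mem hx, Set.indicator_of_notMem
    (not_mem_J_of_mem hx (by norm_num))]
  simp

lemma haar00_left {x : ℝ} (hx : x ∈ J 1 0) : haar 0 0 x = -1 := by
  rw [haar00_apply, Set.indicator_of_notMem
    (not_mem_J_of_mem hx (by norm_num)), Set.indicator_of_mem hx]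
  simp

lemma integrableOn_haar00 : IntegrableOn (haar 0 0) (Set.Icc 0 1) volume := by
  have : haar 0 0 = fun x => (J 1 1).indicator (fun _ => (1:ℝ)) x
      - (J 1 0).indicator (fun _ => (1:ℝ)) x := funext fun x => haar00_apply x
  rw [IntegrableOn, this]
  exact (indicator_J_integrable 1 _ Measure.restrict_le_self).sub
    (indicator_J_integrable 1 _ Measure.restrict_le_self)

lemma setIntegral_indicator_J {n k : ℕ} (hk : k < 2^n) (c : ℝ) :
    ∫ x in Set.Icc (0:ℝ) 1, (J n k).indicator (fun _ => c) x = c * ((2:ℝ)^n)⁻¹ := by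
  rw [setIntegral_indicator (measurableSet_J _ _),
    Set.inter_eq_self_of_subset_right ((J_subset hk).trans Set.Ico_subset_Icc_self),
    setIntegral_const, measureReal_def, volume_J, ENNReal.toReal_ofReal (by positivity), smul_eq_mul,
    mul_comm]

lemma integral_haar00 : ∫ x in Set.Icc (0:ℝ) 1, haar 0 0 x = 0 := by
  have : ∀ x, haar 0 0 x = (J 1 1).indicator (fun _ => (1:ℝ)) x
      - (J 1 0).indicator (fun _ => (1:ℝ)) x := fun x => haar00_apply x
  rw [integral_congr_ae (Filter.Eventually.of_forall this),
    integral_sub (indicator_J_integrable 1 _ Measure.restrict_le_self)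
      (indicator_J_integrable 1 _ Measure.restrict_le_self),
    setIntegral_indicator_J (by norm_num), setIntegral_indicator_J (by norm_num)]
  ring

lemma haarCoeff00_haar00 : haarCoeff (haar 0 0) 0 0 = 1 := by
  rw [haarCoeff_eq (haar 0 0) integrableOn_haar00 (by norm_num : 0 < 2^0)]
  have h1 : ∫ x in J (0+1) (2*0+1), haar 0 0 x = 1/2 := by
    have : ∀ x ∈ J 1 1, haar 0 0 x = 1 := fun x hx => haar00_right hx
    rw [setIntegral_congr_fun (measurableSet_J _ _) this, setIntegral_const, measureReal_def, volume_J,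
      ENNReal.toReal_ofReal (by positivity)]
    norm_num
  have h2 : ∫ x in J (0+1) (2*0), haar 0 0 x = -(1/2) := by
    have : ∀ x ∈ J 1 0, haar 0 0 x = -1 := fun x hx => haar00_left hx
    rw [setIntegral_congr_fun (measurableSet_J _ _) this, setIntegral_const, measureReal_def, volume_J,
      ENNReal.toReal_ofReal (by positivity)]
    norm_num
  rw [h1, h2]
  norm_num

lemma haarCoeff_haar00_ne {n k : ℕ} (h : ¬(n = 0 ∧ k = 0)) :
    haarCoeff (haar 0 0) n k = 0 := by
  by_cases hk : 2^n ≤ k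
  · exact haarCoeff_zero_of_ge _ hk
  push_neg at hk
  match n with
  | 0 =>
    interval_cases k
    · exact absurd ⟨rfl, rfl⟩ h
  | (m+1) =>
    rw [haarCoeff_eq (haar 0 0) integrableOn_haar00 hk]
    set b := k / 2^m with hb
    have hsub : J (m+1) k ⊆ J 1 b := by
      have := J_chain 1 m k
      rwa [show 1 + m = m + 1 by omega] at this
    have hblt : b < 2 := by
      rw [hb]
      exact Nat.div_lt_of_lt_mul (by rw [← pow_succ]; exact hk)
    have hconst : ∀ x ∈ J (m+1) k, haar 0 0 x = (if b = 1 then (1:ℝ) else -1) := by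
      intro x hx
      have hb01 : b = 0 ∨ b = 1 := by
        rcases b with _ | b'
        · exact Or.inl rfl
        · right; omega
      rcases hb01 with h0 | h1
      · rw [if_neg (by omega), haar00_left (h0 ▸ hsub hx)]
      · rw [if_pos h1, haar00_right (h1 ▸ hsub hx)]
    set e := (if b = 1 then (1:ℝ) else -1) with he
    have hL : ∀ x ∈ J (m+1+1) (2*k+1), haar 0 0 x = e :=
      fun x hx => hconst x (J_succ_subset_right hx)
    have hR : ∀ x ∈ J (m+1+1) (2*k), haar 0 0 x = e :=
      fun x hx => hconst x (J_succ_subset_left hx)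
    rw [setIntegral_congr_fun (measurableSet_J _ _) hL,
      setIntegral_congr_fun (measurableSet_J _ _) hR,
      setIntegral_const, setIntegral_const, measureReal_def, measureReal_def, volume_J, volume_J]
    ring
lemma sqFn_haar00_le (x : ℝ) : sqFn (haar 0 0) x ≤ 1 := by
  rw [sqFn]
  have ht : (∑' p : ℕ × ℕ, (haarCoeff (haar 0 0) p.1 p.2) ^ 2
      * (dyadicI p.1 p.2).indicator 1 x)
      = (haarCoeff (haar 0 0) 0 0) ^ 2 * (dyadicI 0 0).indicator 1 x := by
    refine tsum_eq_single ((0,0) : ℕ × ℕ) (fun p hp => ?_)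
    have : ¬(p.1 = 0 ∧ p.2 = 0) := by
      intro ⟨h1, h2⟩
      exact hp (Prod.ext h1 h2)
    rw [haarCoeff_haar00_ne this]
    ring
  rw [ht, haarCoeff00_haar00]
  have : (dyadicI 0 0).indicator (1 : ℝ → ℝ) x ≤ 1 := by
    by_cases h : x ∈ dyadicI 0 0
    · rw [Set.indicator_of_mem h]; norm_num
    · rw [Set.indicator_of_notMem h]; norm_num
  calc Real.sqrt (1^2 * (dyadicI 0 0).indicator 1 x)
      ≤ Real.sqrt 1 := Real.sqrt_le_sqrt (by rw [one_pow, one_mul]; exact this)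
    _ = 1 := Real.sqrt_one

lemma admissible_haar00 : Admissible (haar 0 0) :=
  ⟨integrableOn_haar00, integral_haar00,
    Filter.Eventually.of_forall (fun x => sqFn_haar00_le x)⟩

lemma level_set_haar00 : {y ∈ Set.Icc (0:ℝ) 1 | 1 ≤ haar 0 0 y} = J 1 1 := by
  ext y
  constructor
  · rintro ⟨hy, h1⟩
    by_cases hm : y ∈ J 1 1
    · exact hm
    · exfalso
      have := haar00_apply y
      rw [Set.indicator_of_notMem hm] at this
      have hn : (J 1 0).indicator (1 : ℝ → ℝ) y ≥ 0 :=
        Set.indicator_nonneg (fun _ _ => by norm_num) y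
      linarith
  · intro hy
    exact ⟨Set.Ico_subset_Icc_self (J_subset (by norm_num) hy), le_of_eq
      (haar00_right hy).symm⟩

lemma lower_value : (volume {y ∈ Set.Icc (0:ℝ) 1 | 1 ≤ haar 0 0 y}).toReal = 1/2 := by
  rw [level_set_haar00, volume_J, ENNReal.toReal_ofReal (by positivity)]
  norm_num
section Upper

variable (φ : ℝ → ℝ)

/-- average of φ over J n k, times nothing: the martingale value -/
def avg (n k : ℕ) : ℝ := 2^n * ∫ x in J n k, φ x

/-- Haar coefficient computed from averages -/
def aa (n k : ℕ) : ℝ := (avg φ (n+1) (2*k+1) - avg φ (n+1) (2*k)) / 2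

variable {φ}

lemma J_union (n k : ℕ) : J (n+1) (2*k) ∪ J (n+1) (2*k+1) = J n k := by
  rw [Jleft_eq, Jright_eq, J]
  refine Set.Ico_union_Ico_eq_Ico ?_ ?_
  · rw [div_le_div_iff₀ (by positivity) (by positivity), pow_succ]
    nlinarith [pow_pos (by norm_num : (0:ℝ)<2) n]
  · rw [div_le_div_iff₀ (by positivity) (by positivity), pow_succ]
    nlinarith [pow_pos (by norm_num : (0:ℝ)<2) n]

lemma J_disj (n k : ℕ) : Disjoint (J (n+1) (2*k)) (J (n+1) (2*k+1)) := by
  rw [Jleft_eq, Jright_eq]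
  exact Set.Ico_disjoint_Ico_same

lemma avg_split (hφ : Integrable φ volume) (n k : ℕ) :
    avg φ n k = (avg φ (n+1) (2*k) + avg φ (n+1) (2*k+1)) / 2 := by
  unfold avg
  rw [← J_union n k, setIntegral_union (J_disj n k) (measurableSet_J _ _)
    (hφ.integrableOn) (hφ.integrableOn), pow_succ]
  ring

lemma avg_left (hφ : Integrable φ volume) (n k : ℕ) :
    avg φ (n+1) (2*k) = avg φ n k - aa φ n k := by
  rw [avg_split hφ n k, aa]; ring

lemma avg_right (hφ : Integrable φ volume) (n k : ℕ) :
    avg φ (n+1) (2*k+1) = avg φ n k + aa φ n k := by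
  rw [avg_split hφ n k, aa]; ring

lemma avg_child (hφ : Integrable φ volume) (n j : ℕ) :
    avg φ (n+1) j = avg φ n (j/2) + (if j % 2 = 1 then aa φ n (j/2) else - aa φ n (j/2)) := by
  rcases Nat.even_or_odd j with ⟨m, hm⟩ | ⟨m, hm⟩
  · have hj : j = 2*m := by omega
    subst hj
    rw [if_neg (by omega), Nat.mul_div_cancel_left _ (by norm_num : 0 < 2),
      avg_left hφ n m]
    ring
  · subst hm
    rw [if_pos (by omega), show (2*m+1)/2 = m by omega, avg_right hφ n m]

variable (φ) in
/-- "not yet stopped at level n": all averages and jumps along the chain are ≤ lam -/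
def Good (lam : ℝ) : ℕ → ℕ → Prop
  | 0, k => |avg φ 0 k| ≤ lam ∧ |aa φ 0 k| ≤ lam
  | n+1, k => Good lam n (k/2) ∧ |avg φ (n+1) k| ≤ lam ∧ |aa φ (n+1) k| ≤ lam

variable (φ) in
open Classical in
/-- the stopped martingale -/
def D (lam : ℝ) : ℕ → ℕ → ℝ
  | 0, k => avg φ 0 k
  | n+1, k => if Good φ lam n (k/2) then avg φ (n+1) k else D lam n (k/2)

lemma Good_self {lam : ℝ} {n k : ℕ} (h : Good φ lam n k) :
    |avg φ n k| ≤ lam ∧ |aa φ n k| ≤ lam := by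
  cases n with
  | zero => exact h
  | succ n => exact h.2

lemma D_eq {lam : ℝ} {n k : ℕ} (h : Good φ lam n k) : D φ lam n k = avg φ n k := by
  cases n with
  | zero => simp [D]
  | succ n => rw [D, if_pos h.1]

lemma D_bound (hφ : Integrable φ volume) (h0 : avg φ 0 0 = 0) {lam : ℝ} (hlam : 0 ≤ lam) :
    ∀ n k, k < 2^n → |D φ lam n k| ≤ 2*lam := by
  intro n
  induction n with
  | zero =>
    intro k hk
    have hk0 : k = 0 := by omega
    subst hk0
    simp [D, h0]
    linarith
  | succ n ih =>
    intro k hk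
    have hk2 : k/2 < 2^n := by
      rw [pow_succ] at hk
      omega
    by_cases hg : Good φ lam n (k/2)
    · rw [D, if_pos hg]
      obtain ⟨h1, h2⟩ := Good_self hg
      rw [avg_child hφ n k]
      split_ifs with hp
      · calc |avg φ n (k/2) + aa φ n (k/2)| ≤ _ := abs_add_le _ _
          _ ≤ 2*lam := by linarith
      · calc |avg φ n (k/2) + -aa φ n (k/2)| ≤ |avg φ n (k/2)| + |-aa φ n (k/2)| := abs_add_le _ _
          _ ≤ 2*lam := by rw [abs_neg]; linarith
    · rw [D, if_neg hg]
      exact ih (k/2) hk2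

variable (φ) in
def QQ (lam : ℝ) (n : ℕ) : ℝ := ∑ k ∈ Finset.range (2^n), (D φ lam n k)^2 * ((2:ℝ)^n)⁻¹

variable (φ) in
open Classical in
def AG (lam : ℝ) (n : ℕ) : ℝ :=
  ∑ k ∈ Finset.range (2^n), (if Good φ lam n k then (aa φ n k)^2 else 0) * ((2:ℝ)^n)⁻¹

variable (φ) in
def PP (n : ℕ) : ℝ := ∑ k ∈ Finset.range (2^n), (avg φ n k)^2 * ((2:ℝ)^n)⁻¹

variable (φ) in
def AA (n : ℕ) : ℝ := ∑ k ∈ Finset.range (2^n), (aa φ n k)^2 * ((2:ℝ)^n)⁻¹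

lemma sum_range_two_mul (u : ℕ → ℝ) (M : ℕ) :
    ∑ k ∈ Finset.range (2*M), u k = ∑ j ∈ Finset.range M, (u (2*j) + u (2*j+1)) := by
  induction M with
  | zero => simp
  | succ M ih =>
    rw [show 2*(M+1) = 2*M+1+1 by ring, Finset.sum_range_succ, Finset.sum_range_succ,
      ih, Finset.sum_range_succ]
    ring

lemma PP_succ (hφ : Integrable φ volume) (n : ℕ) : PP φ (n+1) = PP φ n + AA φ n := by
  unfold PP AA
  rw [show (2:ℕ)^(n+1) = 2*2^n by ring, sum_range_two_mul, ← Finset.sum_add_distrib]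
  refine Finset.sum_congr rfl (fun j _ => ?_)
  rw [avg_left hφ n j, avg_right hφ n j, pow_succ]
  have h2 : ((2:ℝ)^n) ≠ 0 := by positivity
  field_simp
  ring

open Classical in
lemma QQ_succ (hφ : Integrable φ volume) (lam : ℝ) (n : ℕ) :
    QQ φ lam (n+1) = QQ φ lam n + AG φ lam n := by
  unfold QQ AG
  rw [show (2:ℕ)^(n+1) = 2*2^n by ring, sum_range_two_mul, ← Finset.sum_add_distrib]
  refine Finset.sum_congr rfl (fun j _ => ?_)
  have hd1 : (2*j)/2 = j := by omega
  have hd2 : (2*j+1)/2 = j := by omega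
  by_cases hg : Good φ lam n j
  · rw [D, D, hd1, hd2, if_pos hg, if_pos hg, if_pos hg,
      avg_left hφ n j, avg_right hφ n j, ← D_eq hg, pow_succ]
    have h2 : ((2:ℝ)^n) ≠ 0 := by positivity
    field_simp
    ring
  · rw [D, D, hd1, hd2, if_neg hg, if_neg hg, if_neg hg, pow_succ]
    have h2 : ((2:ℝ)^n) ≠ 0 := by positivity
    field_simp
    ring

lemma QQ_bound (hφ : Integrable φ volume) (h0 : avg φ 0 0 = 0) {lam : ℝ} (hlam : 0 ≤ lam)
    (n : ℕ) : QQ φ lam n ≤ 4*lam^2 := by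
  have h1 : QQ φ lam n ≤ ∑ _k ∈ Finset.range (2^n), (2*lam)^2 * ((2:ℝ)^n)⁻¹ := by
    refine Finset.sum_le_sum (fun k hkmem => ?_)
    have := D_bound hφ h0 hlam n k (Finset.mem_range.1 hkmem)
    have hsq : (D φ lam n k)^2 ≤ (2*lam)^2 := by
      rw [← sq_abs]
      exact pow_le_pow_left₀ (abs_nonneg _) this 2
    exact mul_le_mul_of_nonneg_right hsq (by positivity)
  calc QQ φ lam n ≤ _ := h1
    _ = 4*lam^2 := by
      rw [Finset.sum_const, Finset.card_range, nsmul_eq_mul]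
      push_cast
      have h2 : ((2:ℝ)^n) ≠ 0 := by positivity
      field_simp
      ring

lemma QQ_zero (h0 : avg φ 0 0 = 0) (lam : ℝ) : QQ φ lam 0 = 0 := by
  simp [QQ, D, h0]

lemma AG_sum_le (hφ : Integrable φ volume) (h0 : avg φ 0 0 = 0) {lam : ℝ} (hlam : 0 ≤ lam)
    (N : ℕ) : ∑ n ∈ Finset.range N, AG φ lam n ≤ 4*lam^2 := by
  have key : ∀ N, ∑ n ∈ Finset.range N, AG φ lam n = QQ φ lam N := by
    intro N
    induction N with
    | zero => simp [QQ_zero h0]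
    | succ N ih => rw [Finset.sum_range_succ, ih, QQ_succ hφ lam N]
  rw [key]
  exact QQ_bound hφ h0 hlam N

lemma PP_zero (h0 : avg φ 0 0 = 0) : PP φ 0 = 0 := by
  simp [PP, h0]

lemma PP_eq (hφ : Integrable φ volume) (h0 : avg φ 0 0 = 0) (N : ℕ) :
    PP φ N = ∑ n ∈ Finset.range N, AA φ n := by
  induction N with
  | zero => simp [PP_zero h0]
  | succ N ih => rw [Finset.sum_range_succ, ← ih, PP_succ hφ N]

end Upper
section Upper2

variable {φ : ℝ → ℝ}

lemma stepF_zero {n : ℕ} {w : ℕ → ℝ} {x : ℝ} (hx : x ∉ Set.Ico (0:ℝ) 1) :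
    stepF n w x = 0 :=
  Finset.sum_eq_zero fun k hk =>
    Set.indicator_of_notMem (fun hm => hx (J_subset (Finset.mem_range.1 hk) hm)) _

lemma stepF_sq (n : ℕ) (w : ℕ → ℝ) (x : ℝ) :
    (stepF n w x)^2 = stepF n (fun k => (w k)^2) x := by
  by_cases hx : x ∈ Set.Ico (0:ℝ) 1
  · rw [stepF_eval hx, stepF_eval hx]
  · rw [stepF_zero hx, stepF_zero hx]
    ring

lemma integral_stepF (n : ℕ) (w : ℕ → ℝ) :
    ∫ x, stepF n w x = ∑ k ∈ Finset.range (2^n), w k * ((2:ℝ)^n)⁻¹ := by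
  unfold stepF
  rw [integral_finset_sum _ (fun k _ => indicator_J_integrable (w k) _ le_rfl)]
  refine Finset.sum_congr rfl (fun k hk => ?_)
  rw [integral_indicator_const _ (measurableSet_J n k), measureReal_def, volume_J,
    ENNReal.toReal_ofReal (by positivity), smul_eq_mul, mul_comm]

lemma closedBall_eq_J (n k : ℕ) :
    Metric.closedBall ((2*(k:ℝ)+1)/2^(n+1)) (((2:ℝ)^(n+1))⁻¹)
      = Set.Icc ((k:ℝ)/2^n) (((k:ℝ)+1)/2^n) := by
  rw [Real.closedBall_eq_Icc]
  have e1 : (2*(k:ℝ)+1)/2^(n+1) - ((2:ℝ)^(n+1))⁻¹ = (k:ℝ)/2^n := by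
    rw [pow_succ]; field_simp; ring
  have e2 : (2*(k:ℝ)+1)/2^(n+1) + ((2:ℝ)^(n+1))⁻¹ = ((k:ℝ)+1)/2^n := by
    rw [pow_succ]; field_simp; ring
  rw [e1, e2]

lemma avg_eq_average (n k : ℕ) :
    ⨍ y in Metric.closedBall ((2*(k:ℝ)+1)/2^(n+1)) (((2:ℝ)^(n+1))⁻¹), φ y = avg φ n k := by
  rw [setAverage_eq, closedBall_eq_J, integral_Icc_eq_integral_Ico]
  have hv : volume (Set.Icc ((k:ℝ)/2^n) (((k:ℝ)+1)/2^n)) = ENNReal.ofReal ((2^n : ℝ)⁻¹) := by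
    rw [Real.volume_Icc]
    congr 1
    field_simp
    ring
  rw [measureReal_def, hv, ENNReal.toReal_ofReal (by positivity), avg, J, smul_eq_mul, inv_inv]

lemma ae_tendsto_avg (hφ : Integrable φ volume) :
    ∀ᵐ x ∂(volume : Measure ℝ), x ∈ Set.Ico (0:ℝ) 1 →
      Filter.Tendsto (fun n => avg φ n (idx n x)) Filter.atTop (nhds (φ x)) := by
  filter_upwards [IsUnifLocDoublingMeasure.ae_tendsto_average
    (μ := (volume : Measure ℝ)) hφ.locallyIntegrable 1] with x hx hxI
  have hδ : Filter.Tendsto (fun n : ℕ => ((2:ℝ)^(n+1))⁻¹) Filter.atTop (nhdsWithin 0 (Set.Ioi 0)) := by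
    refine tendsto_nhdsWithin_of_tendsto_nhds_of_eventually_within _ ?_
      (Filter.Eventually.of_forall fun n => Set.mem_Ioi.2 (by positivity))
    simp_rw [← inv_pow]
    exact (tendsto_pow_atTop_nhds_zero_of_lt_one (by norm_num) (by norm_num)).comp
      (Filter.tendsto_add_atTop_nat 1)
  have hmem : ∀ᶠ n in Filter.atTop,
      x ∈ Metric.closedBall ((2*((idx n x):ℝ)+1)/2^(n+1)) (1 * ((2:ℝ)^(n+1))⁻¹) := by
    refine Filter.Eventually.of_forall fun n => ?_
    rw [one_mul, closedBall_eq_J]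
    exact Set.Ico_subset_Icc_self (mem_J_idx hxI n)
  have := hx (fun n => (2*((idx n x):ℝ)+1)/2^(n+1))
    (fun n => ((2:ℝ)^(n+1))⁻¹) hδ hmem
  refine this.congr fun n => ?_
  exact avg_eq_average n (idx n x)

lemma aa_abs_chain (hφ : Integrable φ volume) {x : ℝ} (n : ℕ) :
    |aa φ n (idx n x)| = |avg φ (n+1) (idx (n+1) x) - avg φ n (idx n x)| := by
  have h := avg_child hφ n (idx (n+1) x)
  rw [idx_succ_div_two] at h
  rw [h]
  split_ifs with hp
  · rw [add_sub_cancel_left]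
  · rw [add_sub_cancel_left, abs_neg]

lemma good_of_bounds {x : ℝ} {lam : ℝ}
    (h : ∀ m, |avg φ m (idx m x)| ≤ lam ∧ |aa φ m (idx m x)| ≤ lam) :
    ∀ n, Good φ lam n (idx n x) := by
  intro n
  induction n with
  | zero => exact h 0
  | succ n ih =>
    refine ⟨?_, (h (n+1)).1, (h (n+1)).2⟩
    rw [idx_succ_div_two]
    exact ih

lemma AG_nonneg (lam : ℝ) (n : ℕ) : 0 ≤ AG φ lam n := by
  classical
  refine Finset.sum_nonneg fun k _ => mul_nonneg ?_ (by positivity)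
  split_ifs
  · positivity
  · exact le_refl 0

end Upper2
section Upper3

variable {φ : ℝ → ℝ}

open Classical in
lemma ae_summable_on_good (hφ : Integrable φ volume) (h0 : avg φ 0 0 = 0)
    {lam : ℝ} (hlam : 0 ≤ lam) :
    ∀ᵐ x ∂(volume : Measure ℝ), x ∈ Set.Ico (0:ℝ) 1 →
      (∀ n, Good φ lam n (idx n x)) → Summable (fun n => (aa φ n (idx n x))^2) := by
  set w : ℕ → ℕ → ℝ := fun n k => if Good φ lam n k then (aa φ n k)^2 else 0 with hw
  have hwnn : ∀ n k, 0 ≤ w n k := by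
    intro n k
    rw [hw]
    dsimp only
    split_ifs
    · positivity
    · exact le_refl 0
  set V : ℕ → ℝ → ENNReal := fun n x => ENNReal.ofReal (stepF n (w n) x) with hV
  have hVmeas : ∀ n, Measurable (V n) := fun n =>
    (stepF_measurable n (w n)).ennreal_ofReal
  have hVint : ∀ n, ∫⁻ x, V n x = ENNReal.ofReal (AG φ lam n) := by
    intro n
    rw [hV]
    dsimp only
    rw [← ofReal_integral_eq_lintegral_ofReal (stepF_integrable n (w n) volume le_rfl)
      (Filter.Eventually.of_forall (stepF_nonneg (hwnn n))), integral_stepF]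
    rfl
  have hlint : ∫⁻ x, (∑' n, V n x) ∂volume ≤ ENNReal.ofReal (4*lam^2) := by
    rw [lintegral_tsum (fun n => (hVmeas n).aemeasurable)]
    calc ∑' n, ∫⁻ x, V n x = ∑' n, ENNReal.ofReal (AG φ lam n) := by
          exact tsum_congr hVint
      _ ≤ ENNReal.ofReal (4*lam^2) := by
          rw [ENNReal.tsum_eq_iSup_sum]
          refine iSup_le fun s => ?_
          calc ∑ n ∈ s, ENNReal.ofReal (AG φ lam n)
              = ENNReal.ofReal (∑ n ∈ s, AG φ lam n) :=
                (ENNReal.ofReal_sum_of_nonneg (fun n _ => AG_nonneg lam n)).symm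
            _ ≤ ENNReal.ofReal (4*lam^2) := by
                refine ENNReal.ofReal_le_ofReal ?_
                calc ∑ n ∈ s, AG φ lam n
                    ≤ ∑ n ∈ Finset.range (s.sup id + 1), AG φ lam n := by
                      refine Finset.sum_le_sum_of_subset_of_nonneg ?_
                        (fun n _ _ => AG_nonneg lam n)
                      intro n hn
                      exact Finset.mem_range.2 (Nat.lt_succ_of_le
                        (Finset.le_sup (f := id) hn))
                  _ ≤ 4*lam^2 := AG_sum_le hφ h0 hlam _
  have hae : ∀ᵐ x ∂(volume : Measure ℝ), (∑' n, V n x) < ⊤ :=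
    ae_lt_top (by exact Measurable.ennreal_tsum hVmeas)
      (lt_of_le_of_lt hlint ENNReal.ofReal_lt_top).ne
  filter_upwards [hae] with x hx hxI hgood
  have hterm : ∀ n, V n x = ENNReal.ofReal ((aa φ n (idx n x))^2) := by
    intro n
    rw [hV]
    dsimp only
    rw [stepF_eval hxI, hw]
    dsimp only
    rw [if_pos (hgood n)]
  have hsum := ENNReal.summable_toReal (by rw [tsum_congr hterm] at hx; exact hx.ne)
  refine hsum.congr fun n => ?_
  rw [ENNReal.toReal_ofReal (by positivity)]

lemma ae_summable (hφ : Integrable φ volume) (h0 : avg φ 0 0 = 0) :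
    ∀ᵐ x ∂(volume : Measure ℝ), x ∈ Set.Ico (0:ℝ) 1 →
      Summable (fun n => (aa φ n (idx n x))^2) := by
  have hgoods := MeasureTheory.ae_all_iff.2
    (fun j : ℕ => ae_summable_on_good hφ h0 (Nat.cast_nonneg j : (0:ℝ) ≤ j))
  filter_upwards [ae_tendsto_avg hφ, hgoods] with x htend hgood hxI
  have ht := (htend hxI).abs
  obtain ⟨M, hM⟩ := ht.bddAbove_range
  have hM' : ∀ n, |avg φ n (idx n x)| ≤ M := fun n => hM (Set.mem_range_self n)
  have hM0 : 0 ≤ M := le_trans (abs_nonneg _) (hM' 0)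
  obtain ⟨j, hj⟩ := exists_nat_ge (2*M)
  have hbounds : ∀ m, |avg φ m (idx m x)| ≤ (j:ℝ) ∧ |aa φ m (idx m x)| ≤ (j:ℝ) := by
    intro m
    constructor
    · linarith [hM' m]
    · rw [aa_abs_chain hφ m]
      calc |avg φ (m+1) (idx (m+1) x) - avg φ m (idx m x)|
          ≤ |avg φ (m+1) (idx (m+1) x)| + |avg φ m (idx m x)| := abs_sub _ _
        _ ≤ (j:ℝ) := by linarith [hM' m, hM' (m+1)]
  exact hgood j hxI (good_of_bounds hbounds)

end Upper3
section Final

open Filter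

lemma J00 : J 0 0 = Set.Ico (0:ℝ) 1 := by
  unfold J
  norm_num

lemma upper_bound (f : ℝ → ℝ) (hA : Admissible f) :
    volume {y ∈ Set.Icc (0:ℝ) 1 | 1 ≤ f y} ≤ ENNReal.ofReal (1/2) := by
  obtain ⟨hint, hzero, hsq⟩ := hA
  set f₀ := (hint.aestronglyMeasurable).mk f with hf₀
  have hf₀meas : StronglyMeasurable f₀ := hint.aestronglyMeasurable.stronglyMeasurable_mk
  have haef : f =ᵐ[volume.restrict (Set.Icc 0 1)] f₀ := hint.aestronglyMeasurable.ae_eq_mk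
  set g := (Set.Icc (0:ℝ) 1).indicator f₀ with hg
  have hgmeas : Measurable g := (hf₀meas.measurable).indicator measurableSet_Icc
  have hgint : Integrable g volume := by
    rw [hg, integrable_indicator_iff measurableSet_Icc]
    exact hint.congr haef
  have hJae : ∀ n k : ℕ, k < 2^n → (∫ x in J n k, f x) = ∫ x in J n k, g x := by
    intro n k hk
    refine integral_congr_ae ?_
    have hsub : J n k ⊆ Set.Icc 0 1 := (J_subset hk).trans Set.Ico_subset_Icc_self
    have h1 : f =ᵐ[volume.restrict (J n k)] f₀ :=
      ae_restrict_of_ae_restrict_of_subset hsub haef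
    filter_upwards [h1, ae_restrict_mem (measurableSet_J n k)] with x hx hxm
    rw [hx, hg, Set.indicator_of_mem (hsub hxm)]
  have hcoeff : ∀ n k : ℕ, k < 2^n → haarCoeff f n k = aa g n k := by
    intro n k hk
    rw [haarCoeff_eq f hint hk, aa, avg, avg,
      hJae (n+1) (2*k+1) (by rw [pow_succ]; omega),
      hJae (n+1) (2*k) (by rw [pow_succ]; omega), pow_succ]
    ring
  have h00 : avg g 0 0 = 0 := by
    rw [avg, J00, ← integral_Icc_eq_integral_Ico]
    have heq : ∫ x in Set.Icc (0:ℝ) 1, g x = ∫ x in Set.Icc (0:ℝ) 1, f x := by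
      refine integral_congr_ae ?_
      filter_upwards [haef, ae_restrict_mem measurableSet_Icc] with x hx hxm
      rw [hg, Set.indicator_of_mem hxm, ← hx]
    rw [heq, hzero, mul_zero]
  -- transfer the square-function hypothesis to a volume-a.e. statement
  have hsqv : ∀ᵐ x ∂(volume : Measure ℝ), x ∈ Set.Ico (0:ℝ) 1 → sqFn f x ≤ 1 := by
    have hE : volume ({x | ¬ sqFn f x ≤ 1} ∩ Set.Icc (0:ℝ) 1) = 0 := by
      have h := ae_iff.1 hsq
      rwa [Measure.restrict_apply' measurableSet_Icc] at h
    filter_upwards [(measure_eq_zero_iff_ae_notMem).1 hE] with x hx hxI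
    by_contra hcon
    exact hx ⟨hcon, Set.Ico_subset_Icc_self hxI⟩
  have hdyad : ∀ᵐ x ∂(volume : Measure ℝ), ∀ n k : ℕ, x ≠ (k:ℝ)/2^n := by
    have h0 : volume (⋃ (n:ℕ), ⋃ (k:ℕ), {((k:ℝ)/2^n)}) = 0 :=
      measure_iUnion_null fun n => measure_iUnion_null fun k => measure_singleton _
    filter_upwards [(measure_eq_zero_iff_ae_notMem).1 h0] with x hx n k hxe
    exact hx (Set.mem_iUnion.2 ⟨n, Set.mem_iUnion.2 ⟨k, by simp [hxe]⟩⟩)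
  -- (I) chain partial sums bounded by 1
  have hchain : ∀ᵐ x ∂(volume : Measure ℝ), x ∈ Set.Ico (0:ℝ) 1 →
      ∀ N : ℕ, ∑ n ∈ Finset.range N, (aa g n (idx n x))^2 ≤ 1 := by
    filter_upwards [ae_summable hgint h00, hsqv, hdyad] with x hsm hs1 hdy hxI N
    have hsum := hsm hxI
    set e : ℕ → ℕ × ℕ := fun n => (n, idx n x) with he
    have hinj : Function.Injective e := fun a b hab => congrArg Prod.fst hab
    set Fam : ℕ × ℕ → ℝ :=
      fun p => (haarCoeff f p.1 p.2)^2 * (dyadicI p.1 p.2).indicator 1 x with hFam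
    have hFam0 : ∀ p ∉ Set.range e, Fam p = 0 := by
      rintro ⟨n, k⟩ hp
      have hk : k ≠ idx n x := by
        intro hek
        exact hp ⟨n, by rw [he, hek]⟩
      have hxni : x ∉ dyadicI n k := by
        intro hxm
        obtain ⟨hl, hr⟩ := hxm
        have hl' : (k:ℝ)/2^n < x := lt_of_le_of_ne hl (Ne.symm (hdy n k))
        have hr' : x < ((k:ℝ)+1)/2^n := by
          refine lt_of_le_of_ne hr ?_
          have := hdy n (k+1)
          push_cast at this
          exact this
        exact hk (eq_idx_of_mem ⟨hl, hr'⟩)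
      rw [hFam]
      dsimp only
      rw [Set.indicator_of_notMem hxni, mul_zero]
    have hFe : ∀ n, Fam (e n) = (aa g n (idx n x))^2 := by
      intro n
      rw [hFam, he]
      dsimp only
      have hxm : x ∈ dyadicI n (idx n x) := by
        have := mem_J_idx hxI n
        exact ⟨this.1, this.2.le⟩
      rw [hcoeff n (idx n x) (idx_lt hxI n), Set.indicator_of_mem hxm, Pi.one_apply,
        mul_one]
    have hFamSum : Summable Fam := by
      refine (Function.Injective.summable_iff hinj hFam0).1 ?_
      exact hsum.congr fun n => (hFe n).symm
    have hnn : ∀ p, 0 ≤ Fam p := fun p =>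
      mul_nonneg (sq_nonneg _) (Set.indicator_nonneg (fun _ _ => zero_le_one) x)
    have hle : ∑ n ∈ Finset.range N, (aa g n (idx n x))^2
        = ∑ p ∈ (Finset.range N).image e, Fam p := by
      rw [Finset.sum_image (fun a _ b _ hab => hinj hab)]
      exact Finset.sum_congr rfl fun n _ => (hFe n).symm
    rw [hle]
    calc ∑ p ∈ (Finset.range N).image e, Fam p
        ≤ ∑' p, Fam p := Summable.sum_le_tsum _ (fun p _ => hnn p) hFamSum
      _ ≤ 1 := by
        have hs := hs1 hxI
        rw [sqFn] at hs
        have htn : 0 ≤ ∑' p : ℕ×ℕ, Fam p := tsum_nonneg hnn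
        nlinarith [Real.sq_sqrt htn, Real.sqrt_nonneg (∑' p : ℕ×ℕ, Fam p)]
  -- (II) Parseval bound
  have hPP : ∀ N, PP g N ≤ 1 := by
    intro N
    have hTT : ∫ x in Set.Ico (0:ℝ) 1,
        (∑ n ∈ Finset.range N, stepF n (fun k => (aa g n k)^2) x)
        = ∑ n ∈ Finset.range N, AA g n := by
      rw [integral_finset_sum _ (fun n _ => stepF_integrable _ _ _ Measure.restrict_le_self)]
      exact Finset.sum_congr rfl fun n _ => by rw [setIntegral_stepF]; rfl
    have hmono : ∫ x in Set.Ico (0:ℝ) 1,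
        (∑ n ∈ Finset.range N, stepF n (fun k => (aa g n k)^2) x)
        ≤ ∫ x in Set.Ico (0:ℝ) 1, (1:ℝ) := by
      refine integral_mono_ae
        (integrable_finset_sum _ (fun n _ => stepF_integrable _ _ _ Measure.restrict_le_self))
        (integrableOn_const (by rw [Real.volume_Ico]; norm_num)) ?_
      filter_upwards [ae_restrict_of_ae hchain, ae_restrict_mem measurableSet_Ico]
        with x hch hxm
      calc ∑ n ∈ Finset.range N, stepF n (fun k => (aa g n k)^2) x
          = ∑ n ∈ Finset.range N, (aa g n (idx n x))^2 :=
            Finset.sum_congr rfl fun n _ => stepF_eval hxm _ _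
        _ ≤ 1 := hch hxm N
    rw [PP_eq hgint h00 N, ← hTT]
    calc _ ≤ ∫ x in Set.Ico (0:ℝ) 1, (1:ℝ) := hmono
      _ = 1 := by simp [Real.volume_Ico]
  -- (III) Fatou
  have hFatou : (∫⁻ x in Set.Ico (0:ℝ) 1, ENNReal.ofReal ((g x)^2)) ≤ 1 := by
    have hconv' : ∀ᵐ x ∂(volume.restrict (Set.Ico (0:ℝ) 1)),
        Tendsto (fun N => ENNReal.ofReal ((stepF N (fun k => avg g N k) x)^2))
          atTop (nhds (ENNReal.ofReal ((g x)^2))) := by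
      filter_upwards [ae_restrict_of_ae (ae_tendsto_avg hgint),
        ae_restrict_mem measurableSet_Ico] with x htd hxm
      have h1 : Tendsto (fun N => stepF N (fun k => avg g N k) x) atTop (nhds (g x)) :=
        (htd hxm).congr fun N => (stepF_eval hxm N _).symm
      exact (ENNReal.continuous_ofReal.tendsto _).comp (h1.pow 2)
    have heq : (∫⁻ x in Set.Ico (0:ℝ) 1, ENNReal.ofReal ((g x)^2))
        = ∫⁻ x in Set.Ico (0:ℝ) 1,
            liminf (fun N => ENNReal.ofReal ((stepF N (fun k => avg g N k) x)^2)) atTop := by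
      refine lintegral_congr_ae ?_
      filter_upwards [hconv'] with x hx
      rw [hx.liminf_eq]
    rw [heq]
    have hN : ∀ N, (∫⁻ x in Set.Ico (0:ℝ) 1,
        ENNReal.ofReal ((stepF N (fun k => avg g N k) x)^2)) ≤ 1 := by
      intro N
      calc (∫⁻ x in Set.Ico (0:ℝ) 1, ENNReal.ofReal ((stepF N (fun k => avg g N k) x)^2))
          = ∫⁻ x in Set.Ico (0:ℝ) 1,
              ENNReal.ofReal (stepF N (fun k => (avg g N k)^2) x) :=
            lintegral_congr fun x => by rw [stepF_sq]
        _ = ENNReal.ofReal (∫ x in Set.Ico (0:ℝ) 1, stepF N (fun k => (avg g N k)^2) x) :=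
            (ofReal_integral_eq_lintegral_ofReal
              (stepF_integrable _ _ _ Measure.restrict_le_self)
              (Filter.Eventually.of_forall (stepF_nonneg (fun k => sq_nonneg _)))).symm
        _ = ENNReal.ofReal (PP g N) := by rw [setIntegral_stepF]; rfl
        _ ≤ ENNReal.ofReal 1 := ENNReal.ofReal_le_ofReal (hPP N)
        _ = 1 := ENNReal.ofReal_one
    calc ∫⁻ x in Set.Ico (0:ℝ) 1,
          liminf (fun N => ENNReal.ofReal ((stepF N (fun k => avg g N k) x)^2)) atTop
        ≤ liminf (fun N => ∫⁻ x in Set.Ico (0:ℝ) 1,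
            ENNReal.ofReal ((stepF N (fun k => avg g N k) x)^2)) atTop :=
          lintegral_liminf_le (fun N => ((stepF_measurable _ _).pow_const 2).ennreal_ofReal)
      _ ≤ limsup (fun N => ∫⁻ x in Set.Ico (0:ℝ) 1,
            ENNReal.ofReal ((stepF N (fun k => avg g N k) x)^2)) atTop := liminf_le_limsup
      _ ≤ 1 := limsup_le_of_le (by isBoundedDefault) (Filter.Eventually.of_forall hN)
  -- (IV) Markov / Cantelli
  have hgsq_int : Integrable (fun x => (g x)^2) (volume.restrict (Set.Ico 0 1)) := by
    refine ⟨((hgmeas.pow_const 2).aestronglyMeasurable), ?_⟩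
    rw [hasFiniteIntegral_iff_ofReal (Filter.Eventually.of_forall fun x => sq_nonneg _)]
    exact lt_of_le_of_lt hFatou (by norm_num)
  have hgreal : ∫ x in Set.Ico (0:ℝ) 1, (g x)^2 ≤ 1 := by
    rw [integral_eq_lintegral_of_nonneg_ae (Filter.Eventually.of_forall fun x => sq_nonneg _)
      ((hgmeas.pow_const 2).aestronglyMeasurable)]
    calc (∫⁻ x in Set.Ico (0:ℝ) 1, ENNReal.ofReal ((g x)^2)).toReal
        ≤ (1 : ENNReal).toReal := ENNReal.toReal_mono (by norm_num) hFatou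
      _ = 1 := by norm_num
  have hg0 : ∫ x in Set.Ico (0:ℝ) 1, g x = 0 := by
    have h := h00
    rw [avg, J00, pow_zero, one_mul] at h
    exact h
  have hgI : Integrable g (volume.restrict (Set.Ico 0 1)) := hgint.restrict
  have hsq4_int : Integrable (fun x => (g x + 1)^2) (volume.restrict (Set.Ico 0 1)) := by
    have hfn : (fun x : ℝ => (g x + 1)^2) = fun x => (g x)^2 + (2*(g x) + 1) :=
      funext fun x => by ring
    rw [hfn]
    exact hgsq_int.add ((hgI.const_mul 2).add
      (integrableOn_const (by rw [Real.volume_Ico]; norm_num)))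
  have hsq4_val : ∫ x in Set.Ico (0:ℝ) 1, (g x + 1)^2 ≤ 2 := by
    have hfn : (fun x : ℝ => (g x + 1)^2) = fun x => (g x)^2 + (2*(g x) + 1) :=
      funext fun x => by ring
    have hc : Integrable (fun _ : ℝ => (1:ℝ)) (volume.restrict (Set.Ico 0 1)) :=
      integrableOn_const (by rw [Real.volume_Ico]; norm_num)
    have h21 : Integrable (fun x => 2 * g x + 1) (volume.restrict (Set.Ico 0 1)) := by
      exact (hgI.const_mul 2).add hc
    rw [hfn]
    rw [integral_add hgsq_int h21]
    have h2 : (∫ x in Set.Ico (0:ℝ) 1, (2 * g x + 1)) = 1 := by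
      rw [integral_add (hgI.const_mul 2) hc, MeasureTheory.integral_const_mul, hg0]
      simp [Real.volume_Ico]
    rw [h2]
    linarith [hgreal]
  have hmark := mul_meas_ge_le_integral_of_nonneg
    (μ := volume.restrict (Set.Ico (0:ℝ) 1))
    (Filter.Eventually.of_forall fun x => sq_nonneg (g x + 1)) hsq4_int 4
  have hμ4 : (volume.restrict (Set.Ico (0:ℝ) 1)) {x | 4 ≤ (g x + 1)^2}
      ≤ ENNReal.ofReal (1/2) := by
    have hne : (volume.restrict (Set.Ico (0:ℝ) 1)) {x | 4 ≤ (g x + 1)^2} ≠ ⊤ := by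
      have hle : (volume.restrict (Set.Ico (0:ℝ) 1)) {x | 4 ≤ (g x + 1)^2}
          ≤ (volume.restrict (Set.Ico (0:ℝ) 1)) Set.univ := measure_mono (Set.subset_univ _)
      rw [Measure.restrict_apply_univ] at hle
      exact (lt_of_le_of_lt hle (by rw [Real.volume_Ico]; norm_num)).ne
    rw [ENNReal.le_ofReal_iff_toReal_le hne (by norm_num)]
    linarith [hmark, hsq4_val, measureReal_def (volume.restrict (Set.Ico (0:ℝ) 1)) {x | 4 ≤ (g x + 1)^2}]
  -- (V) conclude
  have hsub : {y ∈ Set.Icc (0:ℝ) 1 | 1 ≤ f y}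
      ⊆ (({x | 4 ≤ (g x + 1)^2} ∩ Set.Ico 0 1) ∪ ({x | f x ≠ f₀ x} ∩ Set.Icc 0 1))
        ∪ {(1:ℝ)} := by
    rintro y ⟨hyI, hy1⟩
    by_cases he : f y = f₀ y
    · by_cases hy : y = (1:ℝ)
      · exact Or.inr (by simp [hy])
      · refine Or.inl (Or.inl ⟨?_, ⟨hyI.1, lt_of_le_of_ne hyI.2 hy⟩⟩)
        have hgy : g y = f y := by rw [hg, Set.indicator_of_mem hyI, ← he]
        have h1 : (1:ℝ) ≤ g y := hgy ▸ hy1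
        show (4:ℝ) ≤ (g y + 1)^2
        nlinarith
    · exact Or.inl (Or.inr ⟨he, hyI⟩)
  have hnull : volume ({x | f x ≠ f₀ x} ∩ Set.Icc (0:ℝ) 1) = 0 := by
    have h := ae_iff.1 haef
    rwa [Measure.restrict_apply' measurableSet_Icc] at h
  calc volume {y ∈ Set.Icc (0:ℝ) 1 | 1 ≤ f y}
      ≤ volume ((({x | 4 ≤ (g x + 1)^2} ∩ Set.Ico 0 1)
          ∪ ({x | f x ≠ f₀ x} ∩ Set.Icc 0 1)) ∪ {(1:ℝ)}) := measure_mono hsub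
    _ ≤ volume (({x | 4 ≤ (g x + 1)^2} ∩ Set.Ico 0 1)
          ∪ ({x | f x ≠ f₀ x} ∩ Set.Icc 0 1)) + volume {(1:ℝ)} := measure_union_le _ _
    _ ≤ (volume ({x | 4 ≤ (g x + 1)^2} ∩ Set.Ico 0 1)
          + volume ({x | f x ≠ f₀ x} ∩ Set.Icc 0 1)) + volume {(1:ℝ)} :=
        add_le_add_left (measure_union_le _ _) _
    _ ≤ (ENNReal.ofReal (1/2) + 0) + 0 := by
        refine add_le_add (add_le_add ?_ (le_of_eq hnull)) (le_of_eq (measure_singleton 1))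
        rw [← Measure.restrict_apply' measurableSet_Ico]
        exact hμ4
    _ = ENNReal.ofReal (1/2) := by simp

end Final
end BP

theorem bellman_one : bellman 1 = 1 / 2 := by
  rw [bellman]
  have hmem : (1/2 : ℝ) ∈ {m : ℝ | ∃ f : ℝ → ℝ, Admissible f ∧
      m = (volume { y ∈ Set.Icc (0 : ℝ) 1 | (1:ℝ) ≤ f y }).toReal} :=
    ⟨haar 0 0, BP.admissible_haar00, BP.lower_value.symm⟩
  have hub : ∀ m ∈ {m : ℝ | ∃ f : ℝ → ℝ, Admissible f ∧
      m = (volume { y ∈ Set.Icc (0 : ℝ) 1 | (1:ℝ) ≤ f y }).toReal}, m ≤ 1/2 := by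
    rintro m ⟨f, hf, rfl⟩
    calc (volume { y ∈ Set.Icc (0 : ℝ) 1 | (1:ℝ) ≤ f y }).toReal
        ≤ (ENNReal.ofReal (1/2)).toReal :=
          ENNReal.toReal_mono ENNReal.ofReal_ne_top (BP.upper_bound f hf)
      _ = 1/2 := ENNReal.toReal_ofReal (by norm_num)
  exact le_antisymm (csSup_le ⟨1/2, hmem⟩ hub) (le_csSup ⟨1/2, hub⟩ hmem)

end
end

section
/- For every integer n ≥ 1, A(2^{−n}) = √(3/(4ⁿ − 1)), and the function f = √(3/(4ⁿ−1))·(1 − 2ⁿ·χ_{[0,2^{−n}]}) satisfies ∫_I f = 0, Sf ≤ 1 everywhere on I, and μ{f ≥ A(2^{−n})} = 1 − 2^{−n}. -/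
open MeasureTheory

noncomputable section

/-- The nonlinear mean `M[a,b] = (a+b)/√(4+(a-b)²)`. -/
def nlMean (a b : ℝ) : ℝ := (a + b) / Real.sqrt (4 + (a - b) ^ 2)

lemma haar_eq (m k : ℕ) (x : ℝ) :
    haar m k x =
      (Set.Ico ((2 * (k : ℝ) + 1) / 2 ^ (m + 1)) (((k : ℝ) + 1) / 2 ^ m)).indicator 1 x
      - (Set.Ico ((k : ℝ) / 2 ^ m) ((2 * (k : ℝ) + 1) / 2 ^ (m + 1))).indicator 1 x := by
  unfold haar
  by_cases h1 : x ∈ Set.Ico ((k : ℝ) / 2 ^ m) ((2 * (k : ℝ) + 1) / 2 ^ (m + 1))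
  · have h2 : x ∉ Set.Ico ((2 * (k : ℝ) + 1) / 2 ^ (m + 1)) (((k : ℝ) + 1) / 2 ^ m) := by
      intro h2; exact absurd h2.1 (not_le.mpr h1.2)
    simp [h1, h2]
  · by_cases h2 : x ∈ Set.Ico ((2 * (k : ℝ) + 1) / 2 ^ (m + 1)) (((k : ℝ) + 1) / 2 ^ m)
    · simp [h1, h2]
    · simp [h1, h2]

lemma integral_indicator_Ico (b u v : ℝ) :
    ∫ x in Set.Icc (0:ℝ) b, (Set.Ico u v).indicator (1 : ℝ → ℝ) x
      = (volume (Set.Icc (0:ℝ) b ∩ Set.Ico u v)).toReal := by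
  rw [setIntegral_indicator measurableSet_Ico]
  simp [Pi.one_def]
  rfl

lemma vol_inter_full {b u v : ℝ} (hu : 0 ≤ u) (hv : v ≤ b) :
    volume (Set.Icc (0:ℝ) b ∩ Set.Ico u v) = ENNReal.ofReal (v - u) := by
  rw [Set.inter_eq_right.mpr, Real.volume_Ico]
  intro x hx
  exact ⟨hu.trans hx.1, (le_of_lt hx.2).trans hv⟩

lemma vol_inter_zero {b u v : ℝ} (hu : b ≤ u) :
    volume (Set.Icc (0:ℝ) b ∩ Set.Ico u v) = 0 := by
  apply measure_mono_null (t := {b}) _ (measure_singleton b)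
  intro x hx
  simp only [Set.mem_singleton_iff]
  exact le_antisymm hx.1.2 (hu.trans hx.2.1)

lemma vol_inter_left {b v : ℝ} (hb : 0 ≤ b) (hv : b ≤ v) :
    volume (Set.Icc (0:ℝ) b ∩ Set.Ico 0 v) = ENNReal.ofReal b := by
  apply le_antisymm
  · calc volume (Set.Icc (0:ℝ) b ∩ Set.Ico 0 v) ≤ volume (Set.Icc (0:ℝ) b) :=
        measure_mono Set.inter_subset_left
      _ = ENNReal.ofReal b := by rw [Real.volume_Icc]; ring_nf
  · calc ENNReal.ofReal b = volume (Set.Ico (0:ℝ) b) := by rw [Real.volume_Ico]; ring_nf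
      _ ≤ volume (Set.Icc (0:ℝ) b ∩ Set.Ico 0 v) := by
          apply measure_mono
          intro x hx
          exact ⟨⟨hx.1, le_of_lt hx.2⟩, ⟨hx.1, lt_of_lt_of_le hx.2 hv⟩⟩

lemma intOn_ind (u v : ℝ) (s : Set ℝ) :
    IntegrableOn ((Set.Ico u v).indicator (1:ℝ→ℝ)) s volume := by
  apply Integrable.integrableOn
  rw [integrable_indicator_iff measurableSet_Ico]
  exact (integrableOn_const_iff).mpr (Or.inr measure_Ico_lt_top)

lemma haar_int_full (m k : ℕ) {b : ℝ} (hr : ((k:ℝ)+1)/2^m ≤ b) :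
    ∫ x in Set.Icc (0:ℝ) b, haar m k x = 0 := by
  have h2 : (0:ℝ) < 2 ^ m := by positivity
  have h2' : (0:ℝ) < 2 ^ (m+1) := by positivity
  have hmidr : (2 * (k:ℝ) + 1) / 2 ^ (m + 1) ≤ ((k:ℝ)+1) / 2 ^ m := by
    rw [div_le_div_iff₀ h2' h2]; push_cast; ring_nf; nlinarith [h2, (Nat.cast_nonneg k : (0:ℝ) ≤ k)]
  have hlmid : (k:ℝ) / 2 ^ m ≤ (2 * (k:ℝ) + 1) / 2 ^ (m + 1) := by
    rw [div_le_div_iff₀ h2 h2']; push_cast; ring_nf; nlinarith [h2, (Nat.cast_nonneg k : (0:ℝ) ≤ k)]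
  have hmid0 : (0:ℝ) ≤ (2 * (k:ℝ) + 1) / 2 ^ (m + 1) := by positivity
  have hl0 : (0:ℝ) ≤ (k:ℝ) / 2 ^ m := by positivity
  simp_rw [haar_eq]
  rw [integral_sub (intOn_ind _ _ _) (intOn_ind _ _ _),
    integral_indicator_Ico, integral_indicator_Ico,
    vol_inter_full hmid0 hr, vol_inter_full hl0 (hmidr.trans hr),
    ENNReal.toReal_ofReal (by linarith), ENNReal.toReal_ofReal (by linarith)]
  field_simp
  ring

lemma haar_int_zero (m k : ℕ) {b : ℝ} (hb : b ≤ (k:ℝ)/2^m) :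
    ∫ x in Set.Icc (0:ℝ) b, haar m k x = 0 := by
  have h2 : (0:ℝ) < 2 ^ m := by positivity
  have h2' : (0:ℝ) < 2 ^ (m+1) := by positivity
  have hlmid : (k:ℝ) / 2 ^ m ≤ (2 * (k:ℝ) + 1) / 2 ^ (m + 1) := by
    rw [div_le_div_iff₀ h2 h2']; push_cast; ring_nf; nlinarith [h2, (Nat.cast_nonneg k : (0:ℝ) ≤ k)]
  simp_rw [haar_eq]
  rw [integral_sub (intOn_ind _ _ _) (intOn_ind _ _ _),
    integral_indicator_Ico, integral_indicator_Ico,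
    vol_inter_zero (hb.trans hlmid), vol_inter_zero hb]
  simp

lemma haar_int_left (m : ℕ) {b : ℝ} (hb0 : 0 ≤ b) (hb : b ≤ 1 / 2 ^ (m+1)) :
    ∫ x in Set.Icc (0:ℝ) b, haar m 0 x = -b := by
  simp_rw [haar_eq]
  have h0 : ((0:ℕ):ℝ) / 2 ^ m = 0 := by norm_num
  have hmid : (2 * ((0:ℕ):ℝ) + 1) / 2 ^ (m+1) = 1 / 2 ^ (m+1) := by norm_num
  rw [integral_sub (intOn_ind _ _ _) (intOn_ind _ _ _),
    integral_indicator_Ico, integral_indicator_Ico, h0, hmid,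
    vol_inter_zero hb, vol_inter_left hb0 hb, ENNReal.toReal_ofReal hb0]
  simp

lemma haar_intOn_s9 (m k : ℕ) (s : Set ℝ) : IntegrableOn (haar m k) s := by
  have h : haar m k = fun x =>
      (Set.Ico ((2 * (k : ℝ) + 1) / 2 ^ (m + 1)) (((k : ℝ) + 1) / 2 ^ m)).indicator 1 x
      - (Set.Ico ((k : ℝ) / 2 ^ m) ((2 * (k : ℝ) + 1) / 2 ^ (m + 1))).indicator 1 x :=
    funext (haar_eq m k)
  rw [h]
  exact (intOn_ind _ _ s).sub (intOn_ind _ _ s)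

lemma haar_int_one (m k : ℕ) : ∫ x in Set.Icc (0:ℝ) 1, haar m k x = 0 := by
  by_cases hk : k < 2 ^ m
  · apply haar_int_full
    rw [div_le_one (by positivity)]
    have : (k:ℝ) + 1 ≤ (2:ℝ)^m := by
      have := Nat.succ_le_of_lt hk
      exact_mod_cast this
    linarith
  · apply haar_int_zero
    rw [le_div_iff₀ (by positivity), one_mul]
    exact_mod_cast not_lt.mp hk

lemma haarCoeff_extremal (n : ℕ) (hn : 1 ≤ n) (m k : ℕ) :
    haarCoeff (fun y => Real.sqrt (3 / (4 ^ n - 1)) *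
      (1 - 2 ^ n * (Set.Icc (0:ℝ) (((2:ℝ)^n)⁻¹)).indicator 1 y)) m k
    = if m < n ∧ k = 0 then Real.sqrt (3 / (4 ^ n - 1)) * 2 ^ m else 0 := by
  set c := Real.sqrt (3 / (4 ^ n - 1)) with hc
  set b := ((2:ℝ)^n)⁻¹ with hbdef
  have hb0 : 0 ≤ b := by positivity
  have hb1 : b ≤ 1 := by
    rw [hbdef, inv_le_one_iff₀]
    right; exact one_le_pow₀ one_le_two
  have hfh : ∀ x, c * (1 - 2 ^ n * (Set.Icc (0:ℝ) b).indicator 1 x) * haar m k x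
      = c * haar m k x - (c * 2^n) * (Set.Icc (0:ℝ) b).indicator (haar m k) x := by
    intro x
    by_cases hx : x ∈ Set.Icc (0:ℝ) b
    · simp only [Set.indicator_of_mem hx, Pi.one_apply]; ring
    · simp only [Set.indicator_of_notMem hx]; ring
  have hint := haar_intOn_s9 m k (Set.Icc (0:ℝ) 1)
  unfold haarCoeff
  rw [integral_congr_ae (Filter.Eventually.of_forall hfh)]
  rw [integral_sub (hint.const_mul c) ((hint.indicator measurableSet_Icc).const_mul (c * 2^n)),
    MeasureTheory.integral_const_mul, MeasureTheory.integral_const_mul, haar_int_one,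
    setIntegral_indicator measurableSet_Icc,
    Set.inter_eq_right.mpr (Set.Icc_subset_Icc_right hb1)]
  have h2n : (2:ℝ)^n * b = 1 := by rw [hbdef]; field_simp
  by_cases hm : m < n
  · by_cases hk : k = 0
    · subst hk
      have hle : b ≤ 1 / 2 ^ (m+1) := by
        have h1 : (2:ℝ)^(m+1) ≤ 2^n := pow_le_pow_right₀ one_le_two hm
        rw [hbdef, inv_eq_one_div]
        exact one_div_le_one_div_of_le (by positivity) h1
      rw [haar_int_left m hb0 hle, if_pos ⟨hm, rfl⟩]
      linear_combination (2:ℝ)^m * c * h2n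
    · have hzero : ∫ x in Set.Icc (0:ℝ) b, haar m k x = 0 := by
        apply haar_int_zero
        have h1 : (1:ℝ) ≤ (k:ℝ) := by exact_mod_cast Nat.one_le_iff_ne_zero.mpr hk
        have h2 : (2:ℝ)^m ≤ 2^n := pow_le_pow_right₀ one_le_two hm.le
        have h3 : b ≤ ((2:ℝ)^m)⁻¹ := by
          rw [hbdef]; exact inv_anti₀ (by positivity) h2
        calc b ≤ ((2:ℝ)^m)⁻¹ := h3
          _ = 1 / 2^m := by rw [one_div]
          _ ≤ (k:ℝ) / 2^m := by gcongr
      rw [hzero, if_neg (by tauto)]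
      ring
  · rw [if_neg (by tauto)]
    have hzero : ∫ x in Set.Icc (0:ℝ) b, haar m k x = 0 := by
      by_cases hk2 : (k + 1) * 2 ^ n ≤ 2 ^ m
      · apply haar_int_full
        rw [hbdef, div_le_iff₀ (by positivity), inv_mul_eq_div, le_div_iff₀ (by positivity), mul_comm]
        calc ((2:ℝ)^n) * ((k:ℝ)+1) = (((k+1) * 2^n : ℕ) : ℝ) := by push_cast; ring
          _ ≤ (((2:ℕ)^m : ℕ) : ℝ) := by exact_mod_cast hk2
          _ = (2:ℝ)^m := by push_cast; ring
      · apply haar_int_zero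
        have hmn : n ≤ m := le_of_not_gt hm
        have hdvd : 2 ^ n ∣ 2 ^ m := pow_dvd_pow 2 hmn
        have h1 : 2 ^ m < (k + 1) * 2 ^ n := Nat.lt_of_not_le hk2
        have h2 : 2 ^ m ≤ k * 2 ^ n := by
          obtain ⟨d, hd⟩ := hdvd
          rw [hd] at h1 ⊢
          have : d < k + 1 := by
            by_contra hcon
            push_neg at hcon
            refine absurd h1 (not_lt.mpr ?_)
            calc (k+1) * 2^n ≤ d * 2^n := Nat.mul_le_mul_right _ hcon
              _ = 2^n * d := Nat.mul_comm _ _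
          have : d ≤ k := Nat.lt_succ_iff.mp this
          calc 2^n * d ≤ 2^n * k := Nat.mul_le_mul_left _ this
            _ = k * 2^n := Nat.mul_comm _ _
        have h2' : (2:ℝ)^m ≤ (k:ℝ) * 2^n := by exact_mod_cast h2
        rw [hbdef, inv_le_iff_one_le_mul₀ (by positivity), div_mul_eq_mul_div,
          le_div_iff₀ (by positivity), one_mul]
        exact h2'
    rw [hzero]
    ring

lemma four_pow_pos (n : ℕ) (hn : 1 ≤ n) : (0:ℝ) < 4 ^ n - 1 := by
  have : (4:ℝ)^1 ≤ 4^n := pow_le_pow_right₀ (by norm_num) hn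
  norm_num at this ⊢
  linarith

lemma Aval (A : ℝ → ℝ) (hA0 : A 0 = 0) (hAhalf : A (1 / 2) = 1)
    (hArec : ∀ n : ℕ, 2 ≤ n → ∀ k : ℕ, Odd k → k < 2 ^ (n - 1) →
      A ((k : ℝ) / 2 ^ n) =
        nlMean (A (((k : ℝ) - 1) / 2 ^ n)) (A (((k : ℝ) + 1) / 2 ^ n))) :
    ∀ n : ℕ, 1 ≤ n → A (((2 : ℝ) ^ n)⁻¹) = Real.sqrt (3 / (4 ^ n - 1)) := by
  intro n hn
  induction n, hn using Nat.le_induction with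
  | base =>
    rw [show (((2:ℝ)^1)⁻¹) = 1/2 by norm_num, hAhalf]
    norm_num
  | succ n hn ih =>
    have hD : (0:ℝ) < 4 ^ n - 1 := four_pow_pos n hn
    have hD' : (0:ℝ) < 4 ^ (n+1) - 1 := four_pow_pos (n+1) (by omega)
    have hrec := hArec (n+1) (by omega) 1 odd_one
      (by simpa using Nat.one_lt_two_pow_iff.mpr (by omega))
    have e1 : ((1:ℕ):ℝ) / 2 ^ (n+1) = ((2:ℝ) ^ (n+1))⁻¹ := by push_cast; rw [one_div]
    have e2 : (((1:ℕ):ℝ) - 1) / 2 ^ (n+1) = 0 := by push_cast; ring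
    have e3 : (((1:ℕ):ℝ) + 1) / 2 ^ (n+1) = ((2:ℝ) ^ n)⁻¹ := by
      push_cast
      rw [pow_succ]
      field_simp
      ring
    rw [e1, e2, e3] at hrec
    rw [hrec, hA0, ih]
    set t := 3 / ((4:ℝ) ^ n - 1) with htdef
    have ht : 0 ≤ t := by positivity
    unfold nlMean
    rw [zero_add, zero_sub, neg_pow, Real.sq_sqrt ht]
    have h4t : (0:ℝ) < 4 + t := by positivity
    rw [show (-1:ℝ)^2 * t = t by ring]
    rw [← Real.sqrt_div ht]
    congr 1
    rw [htdef]
    field_simp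
    ring

lemma intOn_indIcc (u v : ℝ) (s : Set ℝ) :
    IntegrableOn ((Set.Icc u v).indicator (1:ℝ→ℝ)) s volume := by
  apply Integrable.integrableOn
  rw [integrable_indicator_iff measurableSet_Icc]
  exact (integrableOn_const_iff).mpr (Or.inr measure_Icc_lt_top)

theorem extremal_function_two_values
    (A : ℝ → ℝ)
    (hAcont : ContinuousOn A (Set.Icc 0 (1 / 2)))
    (hA0 : A 0 = 0) (hAhalf : A (1 / 2) = 1)
    (hArec : ∀ n : ℕ, 2 ≤ n → ∀ k : ℕ, Odd k → k < 2 ^ (n - 1) →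
      A ((k : ℝ) / 2 ^ n) =
        nlMean (A (((k : ℝ) - 1) / 2 ^ n)) (A (((k : ℝ) + 1) / 2 ^ n)))
    (n : ℕ) (hn : 1 ≤ n) :
    A (((2 : ℝ) ^ n)⁻¹) = Real.sqrt (3 / (4 ^ n - 1)) ∧
      (let f : ℝ → ℝ := fun y =>
        Real.sqrt (3 / (4 ^ n - 1)) *
          (1 - 2 ^ n * (Set.Icc (0 : ℝ) (((2 : ℝ) ^ n)⁻¹)).indicator 1 y)
      (∫ y in Set.Icc (0 : ℝ) 1, f y) = 0 ∧
        (∀ y ∈ Set.Icc (0 : ℝ) 1, sqFn f y ≤ 1) ∧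
        (volume { y ∈ Set.Icc (0 : ℝ) 1 | A (((2 : ℝ) ^ n)⁻¹) ≤ f y }).toReal
          = 1 - ((2 : ℝ) ^ n)⁻¹) := by
  have hAv := Aval A hA0 hAhalf hArec n hn
  refine ⟨hAv, ?_⟩
  intro f
  set c := Real.sqrt (3 / (4 ^ n - 1)) with hcdef
  set b := ((2:ℝ)^n)⁻¹ with hbdef
  have hD : (0:ℝ) < 4 ^ n - 1 := four_pow_pos n hn
  have hc2 : c ^ 2 = 3 / (4 ^ n - 1) := Real.sq_sqrt (by positivity)
  have hcpos : 0 < c := Real.sqrt_pos.mpr (by positivity)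
  have hb0 : 0 ≤ b := by positivity
  have hb1 : b ≤ 1 := by
    rw [hbdef, inv_le_one_iff₀]; right; exact one_le_pow₀ one_le_two
  have h2n : (2:ℝ)^n * b = 1 := by rw [hbdef]; field_simp
  -- integral of indicator
  have hIiccb : Set.Icc (0:ℝ) 1 ∩ Set.Icc (0:ℝ) b = Set.Icc (0:ℝ) b :=
    Set.inter_eq_right.mpr (Set.Icc_subset_Icc_right hb1)
  have hindint : ∫ y in Set.Icc (0:ℝ) 1, (Set.Icc (0:ℝ) b).indicator (1:ℝ→ℝ) y = b := by
    rw [setIntegral_indicator measurableSet_Icc, hIiccb]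
    simp only [Pi.one_apply]
    rw [setIntegral_const, Measure.real, Real.volume_Icc, smul_eq_mul, mul_one,
      ENNReal.toReal_ofReal (by linarith)]
    ring
  constructor
  · -- integral zero
    show (∫ y in Set.Icc (0:ℝ) 1, c * (1 - 2 ^ n * (Set.Icc (0:ℝ) b).indicator 1 y)) = 0
    have h1 : ∀ y : ℝ, c * (1 - 2 ^ n * (Set.Icc (0:ℝ) b).indicator 1 y)
        = c - (c * 2^n) * (Set.Icc (0:ℝ) b).indicator (1:ℝ→ℝ) y := by intro y; ring
    rw [integral_congr_ae (Filter.Eventually.of_forall h1)]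
    rw [integral_sub ((integrableOn_const_iff (C := c)).mpr (Or.inr measure_Icc_lt_top))
      ((intOn_indIcc 0 b _).const_mul _), MeasureTheory.integral_const_mul, hindint,
      setIntegral_const, Measure.real, Real.volume_Icc, smul_eq_mul]
    rw [ENNReal.toReal_ofReal (by norm_num)]
    nlinarith [h2n]
  constructor
  · -- square function bound
    intro y hy
    show Real.sqrt (∑' p : ℕ × ℕ, (haarCoeff f p.1 p.2) ^ 2 * (dyadicI p.1 p.2).indicator 1 y) ≤ 1
    have hco : ∀ m k : ℕ, haarCoeff f m k = if m < n ∧ k = 0 then c * 2 ^ m else 0 :=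
      fun m k => haarCoeff_extremal n hn m k
    have htsum : (∑' p : ℕ × ℕ, (haarCoeff f p.1 p.2) ^ 2 * (dyadicI p.1 p.2).indicator 1 y)
        = ∑ p ∈ (Finset.range n) ×ˢ ({0} : Finset ℕ),
            (haarCoeff f p.1 p.2) ^ 2 * (dyadicI p.1 p.2).indicator 1 y := by
      apply tsum_eq_sum
      intro p hp
      rw [Finset.mem_product, Finset.mem_range, Finset.mem_singleton] at hp
      rw [hco, if_neg (by tauto)]
      ring
    rw [htsum]
    have hsumle : ∑ p ∈ (Finset.range n) ×ˢ ({0} : Finset ℕ),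
        (haarCoeff f p.1 p.2) ^ 2 * (dyadicI p.1 p.2).indicator 1 y ≤ 1 := by
      have hle : ∀ p ∈ (Finset.range n) ×ˢ ({0} : Finset ℕ),
          (haarCoeff f p.1 p.2) ^ 2 * (dyadicI p.1 p.2).indicator 1 y
            ≤ c^2 * 4 ^ p.1 := by
        intro p hp
        rw [Finset.mem_product, Finset.mem_range, Finset.mem_singleton] at hp
        rw [hco, if_pos ⟨hp.1, hp.2⟩]
        have hind : (dyadicI p.1 p.2).indicator (1:ℝ→ℝ) y ≤ 1 := by
          by_cases hmem : y ∈ dyadicI p.1 p.2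
          · rw [Set.indicator_of_mem hmem, Pi.one_apply]
          · rw [Set.indicator_of_notMem hmem]; norm_num
        calc (c * 2 ^ p.1) ^ 2 * (dyadicI p.1 p.2).indicator 1 y
            ≤ (c * 2 ^ p.1) ^ 2 * 1 := by
              apply mul_le_mul_of_nonneg_left hind (by positivity)
          _ = c^2 * 4 ^ p.1 := by rw [mul_one]; rw [show (4:ℝ) = 2^2 by norm_num, ← pow_mul]; ring
      calc ∑ p ∈ (Finset.range n) ×ˢ ({0} : Finset ℕ),
            (haarCoeff f p.1 p.2) ^ 2 * (dyadicI p.1 p.2).indicator 1 y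
          ≤ ∑ p ∈ (Finset.range n) ×ˢ ({0} : Finset ℕ), c^2 * 4 ^ p.1 :=
            Finset.sum_le_sum hle
        _ = ∑ m ∈ Finset.range n, c^2 * 4 ^ m := by
            rw [Finset.sum_product]
            simp
        _ = c^2 * ((4^n - 1)/3) := by
            rw [← Finset.mul_sum, geom_sum_eq (by norm_num : (4:ℝ) ≠ 1)]
            norm_num
        _ = 1 := by rw [hc2]; field_simp
    calc Real.sqrt (∑ p ∈ (Finset.range n) ×ˢ ({0} : Finset ℕ),
          (haarCoeff f p.1 p.2) ^ 2 * (dyadicI p.1 p.2).indicator 1 y)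
        ≤ Real.sqrt 1 := Real.sqrt_le_sqrt hsumle
      _ = 1 := Real.sqrt_one
  · -- measure computation
    rw [hAv]
    have hset : { y ∈ Set.Icc (0:ℝ) 1 | c ≤ f y } = Set.Ioc b 1 := by
      ext y
      simp only [Set.mem_setOf_eq, Set.mem_Icc, Set.mem_Ioc]
      constructor
      · rintro ⟨⟨hy0, hy1⟩, hcf⟩
        refine ⟨?_, hy1⟩
        by_contra hyb
        push_neg at hyb
        have hmem : y ∈ Set.Icc (0:ℝ) b := ⟨hy0, hyb⟩
        have : f y = c * (1 - 2^n) := by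
          show c * (1 - 2 ^ n * (Set.Icc (0:ℝ) b).indicator 1 y) = _
          rw [Set.indicator_of_mem hmem]; norm_num
        rw [this] at hcf
        nlinarith [pow_pos (show (0:ℝ) < 2 by norm_num) n, hcpos]
      · rintro ⟨hyb, hy1⟩
        have hy0 : (0:ℝ) ≤ y := le_trans hb0 (le_of_lt hyb)
        refine ⟨⟨hy0, hy1⟩, ?_⟩
        have hnm : y ∉ Set.Icc (0:ℝ) b := fun hmem => absurd hmem.2 (not_le.mpr hyb)
        have : f y = c := by
          show c * (1 - 2 ^ n * (Set.Icc (0:ℝ) b).indicator 1 y) = _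
          rw [Set.indicator_of_notMem hnm]; ring
        rw [this]
    rw [hset, Real.volume_Ioc, ENNReal.toReal_ofReal (by linarith)]
end
end
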